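/- arXiv:2311.18786 — 5 statements merged into one kernel-verified Lean document; each statement's English description precedes it below -/
import Mathlib

section
/- Let k ≥ 3 and let H_k be the (k+1)-vertex graph formed by taking a complete graph on k vertices and adding one new vertex joined by an edge to exactly one vertex of the clique. Then M_{H_k}(n) ≤ 3 for every n ∈ ℕ. -/
open SimpleGraph

/-- The number of subgraphs of `G` isomorphic to `H`. -/
noncomputable def numCopies {α β : Type*} (H : SimpleGraph α) (G : SimpleGraph β) : ℕ :=
  {G' : G.Subgraph | Nonempty (G'.coe ≃g H)}.ncard

/-- One step of the `H`-bootstrap process: add every missing edge whose addition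
creates a new copy of `H`. -/
noncomputable def bootStep {α β : Type*} (H : SimpleGraph α) (G : SimpleGraph β) :
    SimpleGraph β :=
  G ⊔ SimpleGraph.fromRel (fun u v =>
    numCopies H G < numCopies H (G ⊔ SimpleGraph.fromEdgeSet {s(u, v)}))

/-- The `H`-bootstrap process `(G_i)_{i ≥ 0}` on the starting graph `G`. -/
noncomputable def bootProcess {α β : Type*} (H : SimpleGraph α) (G : SimpleGraph β) :
    ℕ → SimpleGraph β
  | 0 => G
  | i + 1 => bootStep H (bootProcess H G i)

/-- The running time `τ_H(G)` of the `H`-bootstrap process on `G`. -/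
noncomputable def runningTime {α β : Type*} (H : SimpleGraph α) (G : SimpleGraph β) : ℕ :=
  sInf {t | bootProcess H G t = bootProcess H G (t + 1)}

/-- `M_H(n)`, the maximum running time of the `H`-bootstrap process over all
`n`-vertex starting graphs. -/
noncomputable def maxRunningTime {α : Type*} (H : SimpleGraph α) (n : ℕ) : ℕ :=
  sSup {t | ∃ G : SimpleGraph (Fin n), runningTime H G = t}

/-- The graph `H_k` on `k+1` vertices: a clique on `{0, …, k−1}` together with a pendant
edge from vertex `0` to the extra vertex `k`. -/
def cliqueWithPendant (k : ℕ) : SimpleGraph (Fin (k + 1)) :=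
  SimpleGraph.fromRel (fun u v => (u.val < k ∧ v.val < k) ∨ (u.val = 0 ∧ v.val = k))

/-! ### Auxiliary lemmas on `numCopies` -/

section Aux
variable {α β : Type*}

/-- Inclusion of subgraphs along `G ≤ G'`. -/
def inclSub {G G' : SimpleGraph β} (h : G ≤ G') (A : G.Subgraph) : G'.Subgraph where
  verts := A.verts
  Adj := A.Adj
  adj_sub := fun hab => h (A.adj_sub hab)
  edge_vert := A.edge_vert
  symm := A.symm

lemma inclSub_injective {G G' : SimpleGraph β} (h : G ≤ G') :
    Function.Injective (inclSub h) := by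
  intro A B hAB
  have h1 : (inclSub h A).verts = (inclSub h B).verts := congrArg _ hAB
  have h2 : (inclSub h A).Adj = (inclSub h B).Adj := congrArg _ hAB
  exact SimpleGraph.Subgraph.ext h1 h2

instance finiteSubgraph [Finite β] {G : SimpleGraph β} : Finite G.Subgraph := by
  apply Finite.of_injective (fun A : G.Subgraph => (A.verts, A.Adj))
  intro A B h
  exact SimpleGraph.Subgraph.ext (congrArg Prod.fst h) (congrArg Prod.snd h)

lemma numCopies_lt_of_copy [Finite β] (H : SimpleGraph α)
    {G G' : SimpleGraph β} (hle : G ≤ G')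
    (A : G'.Subgraph) (hA : Nonempty (A.coe ≃g H))
    {u v : β} (huv : A.Adj u v) (hG : ¬ G.Adj u v) :
    numCopies H G < numCopies H G' := by
  classical
  set S : Set G.Subgraph := {B : G.Subgraph | Nonempty (B.coe ≃g H)} with hS
  set S' : Set G'.Subgraph := {B : G'.Subgraph | Nonempty (B.coe ≃g H)} with hS'
  have himg : insert A (inclSub hle '' S) ⊆ S' := by
    rintro B hB
    rcases hB with rfl | ⟨C, hC, rfl⟩
    · exact hA
    · exact hC
  have hAnot : A ∉ inclSub hle '' S := by
    rintro ⟨C, -, rfl⟩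
    exact hG (C.adj_sub huv)
  calc numCopies H G = (inclSub hle '' S).ncard :=
        (Set.ncard_image_of_injective _ (inclSub_injective hle)).symm
    _ < (insert A (inclSub hle '' S)).ncard := by
        rw [Set.ncard_insert_of_notMem hAnot (Set.toFinite _)]; omega
    _ ≤ numCopies H G' := Set.ncard_le_ncard himg (Set.toFinite _)

lemma exists_copy_of_numCopies_lt (H : SimpleGraph α) {G G' : SimpleGraph β}
    (h : numCopies H G < numCopies H G') :
    ∃ A : G'.Subgraph, Nonempty (A.coe ≃g H) := by
  by_contra hc
  push_neg at hc
  have hempty : {B : G'.Subgraph | Nonempty (B.coe ≃g H)} = ∅ := by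
    ext B; simp [hc B]
  simp only [numCopies] at h
  rw [hempty] at h
  simp at h

lemma copy_embedding {H : SimpleGraph α} {G : SimpleGraph β} (A : G.Subgraph)
    (f : A.coe ≃g H) :
    ∃ g : α → β, Function.Injective g ∧ ∀ i j, H.Adj i j → G.Adj (g i) (g j) := by
  refine ⟨fun i => (f.symm i : β), ?_, ?_⟩
  · intro i j hij
    exact f.symm.injective (Subtype.ext hij)
  · intro i j hij
    have h1 : A.coe.Adj (f.symm i) (f.symm j) := f.symm.map_adj_iff.2 hij
    exact A.adj_sub h1

lemma numCopies_lt_of_embedding [Finite β] (H : SimpleGraph α)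
    {G G' : SimpleGraph β} (hle : G ≤ G') (g : α → β) (hg : Function.Injective g)
    (hadj : ∀ i j, H.Adj i j → G'.Adj (g i) (g j))
    {a b : α} (hab : H.Adj a b) (hG : ¬ G.Adj (g a) (g b)) :
    numCopies H G < numCopies H G' := by
  classical
  let A : G'.Subgraph :=
    { verts := Set.range g
      Adj := fun x y => ∃ i j, H.Adj i j ∧ g i = x ∧ g j = y
      adj_sub := by rintro x y ⟨i, j, hij, rfl, rfl⟩; exact hadj _ _ hij
      edge_vert := by rintro x y ⟨i, j, hij, rfl, rfl⟩; exact ⟨i, rfl⟩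
      symm := ⟨by rintro x y ⟨i, j, hij, rfl, rfl⟩; exact ⟨j, i, hij.symm, rfl, rfl⟩⟩ }
  have hiso : Nonempty (A.coe ≃g H) := by
    refine ⟨⟨(Equiv.ofInjective g hg).symm, ?_⟩⟩
    intro x y
    constructor
    · intro hxy
      exact ⟨_, _, hxy, Equiv.apply_ofInjective_symm hg x, Equiv.apply_ofInjective_symm hg y⟩
    · rintro ⟨i, j, hij, hx, hy⟩
      have hix : (Equiv.ofInjective g hg).symm x = i := by
        apply hg; rw [Equiv.apply_ofInjective_symm hg x, ← hx]
      have hjy : (Equiv.ofInjective g hg).symm y = j := by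
        apply hg; rw [Equiv.apply_ofInjective_symm hg y, ← hy]
      rw [hix, hjy]; exact hij
  exact numCopies_lt_of_copy H hle A hiso ⟨a, b, hab, rfl, rfl⟩ hG

end Aux

/-! ### Adjacency in `cliqueWithPendant` -/

section Hk
variable {k : ℕ}

lemma H_adj_of_lt (hk : 3 ≤ k) {i j : Fin (k+1)} (hij : i ≠ j)
    (hi : i.val < k) (hj : j.val < k) : (cliqueWithPendant k).Adj i j := by
  simp only [cliqueWithPendant, SimpleGraph.fromRel_adj]
  exact ⟨hij, Or.inl (Or.inl ⟨hi, hj⟩)⟩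

lemma H_adj_pendant (hk : 3 ≤ k) :
    (cliqueWithPendant k).Adj ⟨0, by omega⟩ ⟨k, by omega⟩ := by
  rw [cliqueWithPendant, SimpleGraph.fromRel_adj]
  refine ⟨?_, Or.inl (Or.inr ⟨rfl, rfl⟩)⟩
  intro h
  have := congrArg Fin.val h
  simp only [] at this
  omega

lemma H_adj_elim {i j : Fin (k+1)} (h : (cliqueWithPendant k).Adj i j) :
    i ≠ j ∧ ((i.val < k ∧ j.val < k) ∨ (i.val = 0 ∧ j.val = k) ∨ (j.val = 0 ∧ i.val = k)) := by
  simp only [cliqueWithPendant, SimpleGraph.fromRel_adj] at h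
  tauto

end Hk

/-! ### The bootstrap steps -/

section Steps
variable {k n : ℕ}

lemma step2 (hk : 3 ≤ k) {G₁ : SimpleGraph (Fin n)} (c : Fin k → Fin n)
    (hc : Function.Injective c) (hcl : ∀ i j, i ≠ j → G₁.Adj (c i) (c j))
    (i : Fin k) (v : Fin n) (hv : v ≠ c i) :
    (bootStep (cliqueWithPendant k) G₁).Adj (c i) v := by
  by_cases hGa : G₁.Adj (c i) v
  · rw [bootStep, SimpleGraph.sup_adj]; exact Or.inl hGa
  have hvr : ∀ j, v ≠ c j := by
    intro j hj
    rcases eq_or_ne j i with rfl | hji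
    · exact hv hj
    · exact hGa (by rw [hj]; exact hcl i j (Ne.symm hji))
  haveI : NeZero k := ⟨by omega⟩
  set c' : Fin k → Fin n := c ∘ (Equiv.swap 0 i) with hc'def
  have hc'inj : Function.Injective c' := hc.comp (Equiv.injective _)
  have hc'cl : ∀ a b, a ≠ b → G₁.Adj (c' a) (c' b) :=
    fun a b hab => hcl _ _ (fun h => hab ((Equiv.swap 0 i).injective h))
  have hc'0 : c' 0 = c i := by simp [hc'def, Equiv.swap_apply_left]
  have hvr' : ∀ j, v ≠ c' j := fun j => hvr _
  set g : Fin (k+1) → Fin n := fun j => if h : j.val < k then c' ⟨j.val, h⟩ else v with hgdef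
  have hglt : ∀ (j : Fin (k+1)) (h : j.val < k), g j = c' ⟨j.val, h⟩ := by
    intro j h; simp only [hgdef, dif_pos h]
  have hgk : ∀ (j : Fin (k+1)), ¬ j.val < k → g j = v := by
    intro j h; simp only [hgdef, dif_neg h]
  have hginj : Function.Injective g := by
    intro a b hab
    by_cases ha : a.val < k
    · by_cases hb : b.val < k
      · rw [hglt a ha, hglt b hb] at hab
        have := congrArg Fin.val (hc'inj hab)
        exact Fin.ext this
      · rw [hglt a ha, hgk b hb] at hab
        exact absurd hab.symm (hvr' _)
    · by_cases hb : b.val < k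
      · rw [hgk a ha, hglt b hb] at hab
        exact absurd hab (hvr' _)
      · apply Fin.ext; omega
  have hadj : ∀ a b, (cliqueWithPendant k).Adj a b →
      (G₁ ⊔ SimpleGraph.fromEdgeSet {s(c i, v)}).Adj (g a) (g b) := by
    intro a b hab
    obtain ⟨hne, hcases⟩ := H_adj_elim hab
    have hedge : (G₁ ⊔ SimpleGraph.fromEdgeSet {s(c i, v)}).Adj (c i) v := by
      rw [SimpleGraph.sup_adj]
      right
      rw [SimpleGraph.fromEdgeSet_adj]
      exact ⟨rfl, Ne.symm hv⟩
    rcases hcases with ⟨ha, hb⟩ | ⟨ha, hb⟩ | ⟨hb, ha⟩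
    · rw [hglt a ha, hglt b hb, SimpleGraph.sup_adj]
      left
      apply hc'cl
      intro h
      apply hne
      apply Fin.ext
      have h2 := congrArg Fin.val h
      exact h2
    · have ha' : a.val < k := by omega
      rw [hglt a ha', hgk b (by omega)]
      have : (⟨a.val, ha'⟩ : Fin k) = 0 := Fin.ext ha
      rw [this, hc'0]
      exact hedge
    · have hb' : b.val < k := by omega
      rw [hglt b hb', hgk a (by omega)]
      have : (⟨b.val, hb'⟩ : Fin k) = 0 := Fin.ext hb
      rw [this, hc'0]
      exact hedge.symm
  have hga : g ⟨0, by omega⟩ = c i := by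
    have h0 : ((⟨0, by omega⟩ : Fin (k+1))).val < k := by show (0:ℕ) < k; omega
    rw [hglt _ h0]
    exact (congrArg c' (Fin.ext rfl)).trans hc'0
  have hgb : g ⟨k, by omega⟩ = v :=
    hgk _ (by show ¬ (k:ℕ) < k; omega)
  have hlt : numCopies (cliqueWithPendant k) G₁ <
      numCopies (cliqueWithPendant k) (G₁ ⊔ SimpleGraph.fromEdgeSet {s(c i, v)}) := by
    apply numCopies_lt_of_embedding (cliqueWithPendant k) le_sup_left g hginj hadj
      (H_adj_pendant hk)
    rw [hga, hgb]
    exact hGa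
  rw [bootStep, SimpleGraph.sup_adj]
  right
  rw [SimpleGraph.fromRel_adj]
  exact ⟨fun h => hv h.symm, Or.inl hlt⟩

lemma step3 (hk : 3 ≤ k) {G₁ G₂ : SimpleGraph (Fin n)} (hle : G₁ ≤ G₂)
    (c : Fin k → Fin n) (hc : Function.Injective c)
    (hcl : ∀ i j, i ≠ j → G₁.Adj (c i) (c j))
    (h2 : ∀ (i : Fin k) (v : Fin n), v ≠ c i → G₂.Adj (c i) v) :
    bootStep (cliqueWithPendant k) G₂ = ⊤ := by
  haveI : NeZero k := ⟨by omega⟩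
  rw [eq_top_iff]
  intro v w hvw
  rw [SimpleGraph.top_adj] at hvw
  by_cases h2adj : G₂.Adj v w
  · rw [bootStep, SimpleGraph.sup_adj]; exact Or.inl h2adj
  have hvr : ∀ j, v ≠ c j := by
    intro j hj
    exact h2adj (by rw [hj]; exact h2 j w (fun h => hvw (hj.trans h.symm)))
  have hwr : ∀ j, w ≠ c j := by
    intro j hj
    exact h2adj (by rw [hj]; exact (h2 j v (fun h => hvw (h.trans hj.symm))).symm)
  set g : Fin (k+1) → Fin n := fun j =>
    if j.val = 0 then v else if j.val = 1 then w
    else if h : j.val < k then c ⟨j.val, h⟩ else c 0 with hgdef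
  have hg0 : ∀ j : Fin (k+1), j.val = 0 → g j = v := by
    intro j h; simp only [hgdef, if_pos h]
  have hg1 : ∀ j : Fin (k+1), j.val = 1 → g j = w := by
    intro j h; simp only [hgdef]; rw [if_neg (by omega), if_pos h]
  have hgm : ∀ (j : Fin (k+1)) (h : j.val < k), 2 ≤ j.val → g j = c ⟨j.val, h⟩ := by
    intro j h h2j; simp only [hgdef]
    rw [if_neg (by omega), if_neg (by omega), dif_pos h]
  have hgl : ∀ j : Fin (k+1), ¬ j.val < k → g j = c 0 := by
    intro j h; simp only [hgdef]
    rw [if_neg (by omega), if_neg (by omega), dif_neg h]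
  have classify : ∀ j : Fin (k+1), j.val = 0 ∨ j.val = 1 ∨ (2 ≤ j.val ∧ j.val < k) ∨ j.val = k := by
    intro j; have := j.isLt; omega
  have hginj : Function.Injective g := by
    intro a b hab
    have hcinj : ∀ x y : Fin k, c x = c y → x.val = y.val := by
      intro x y h; exact congrArg Fin.val (hc h)
    rcases classify a with ha|ha|⟨ha2,hak⟩|ha <;> rcases classify b with hb|hb|⟨hb2,hbk⟩|hb
    · exact Fin.ext (by omega)
    · rw [hg0 a ha, hg1 b hb] at hab; exact absurd hab hvw
    · rw [hg0 a ha, hgm b hbk hb2] at hab; exact absurd hab (hvr _)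
    · rw [hg0 a ha, hgl b (by omega)] at hab; exact absurd hab (hvr _)
    · rw [hg1 a ha, hg0 b hb] at hab; exact absurd hab.symm hvw
    · exact Fin.ext (by omega)
    · rw [hg1 a ha, hgm b hbk hb2] at hab; exact absurd hab (hwr _)
    · rw [hg1 a ha, hgl b (by omega)] at hab; exact absurd hab (hwr _)
    · rw [hgm a hak ha2, hg0 b hb] at hab; exact absurd hab.symm (hvr _)
    · rw [hgm a hak ha2, hg1 b hb] at hab; exact absurd hab.symm (hwr _)
    · rw [hgm a hak ha2, hgm b hbk hb2] at hab
      have := hcinj _ _ hab; exact Fin.ext (by simpa using this)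
    · rw [hgm a hak ha2, hgl b (by omega)] at hab
      have := hcinj _ _ hab; simp only [Fin.val_zero] at this; omega
    · rw [hgl a (by omega), hg0 b hb] at hab; exact absurd hab.symm (hvr _)
    · rw [hgl a (by omega), hg1 b hb] at hab; exact absurd hab.symm (hwr _)
    · rw [hgl a (by omega), hgm b hbk hb2] at hab
      have := hcinj _ _ hab.symm; simp only [Fin.val_zero] at this; omega
    · exact Fin.ext (by omega)
  have hup : ∀ x y, G₂.Adj x y → (G₂ ⊔ SimpleGraph.fromEdgeSet {s(v, w)}).Adj x y := by
    intro x y h; rw [SimpleGraph.sup_adj]; exact Or.inl h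
  have hE : (G₂ ⊔ SimpleGraph.fromEdgeSet {s(v, w)}).Adj v w := by
    rw [SimpleGraph.sup_adj]; right
    rw [SimpleGraph.fromEdgeSet_adj]; exact ⟨rfl, hvw⟩
  have hadj : ∀ a b, (cliqueWithPendant k).Adj a b →
      (G₂ ⊔ SimpleGraph.fromEdgeSet {s(v, w)}).Adj (g a) (g b) := by
    intro a b hab
    obtain ⟨hne, hcases⟩ := H_adj_elim hab
    rcases hcases with ⟨ha', hb'⟩ | ⟨ha', hb'⟩ | ⟨hb', ha'⟩
    · rcases classify a with ha|ha|⟨ha2,hak⟩|ha <;> rcases classify b with hb|hb|⟨hb2,hbk⟩|hb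
      · exact absurd (Fin.ext (by omega) : a = b) hne
      · rw [hg0 a ha, hg1 b hb]; exact hE
      · rw [hg0 a ha, hgm b hbk hb2]; exact hup _ _ (h2 _ v (hvr _)).symm
      · omega
      · rw [hg1 a ha, hg0 b hb]; exact hE.symm
      · exact absurd (Fin.ext (by omega) : a = b) hne
      · rw [hg1 a ha, hgm b hbk hb2]; exact hup _ _ (h2 _ w (hwr _)).symm
      · omega
      · rw [hgm a hak ha2, hg0 b hb]; exact hup _ _ (h2 _ v (hvr _))
      · rw [hgm a hak ha2, hg1 b hb]; exact hup _ _ (h2 _ w (hwr _))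
      · rw [hgm a hak ha2, hgm b hbk hb2]
        refine hup _ _ (hle (hcl _ _ ?_))
        intro h; exact hne (Fin.ext (by simpa using congrArg Fin.val h))
      · omega
      · omega
      · omega
      · omega
      · omega
    · rw [hg0 a ha', hgl b (by omega)]
      exact hup _ _ (h2 0 v (hvr 0)).symm
    · rw [hg0 b hb', hgl a (by omega)]
      exact hup _ _ (h2 0 v (hvr 0))
  have h01 : (cliqueWithPendant k).Adj ⟨0, by omega⟩ ⟨1, by omega⟩ := by
    apply H_adj_of_lt hk
    · intro h; have := congrArg Fin.val h; simp only [] at this; omega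
    · show (0:ℕ) < k; omega
    · show (1:ℕ) < k; omega
  have hlt : numCopies (cliqueWithPendant k) G₂ <
      numCopies (cliqueWithPendant k) (G₂ ⊔ SimpleGraph.fromEdgeSet {s(v, w)}) := by
    apply numCopies_lt_of_embedding (cliqueWithPendant k) le_sup_left g hginj hadj h01
    rw [hg0 _ rfl, hg1 _ rfl]
    exact h2adj
  rw [bootStep, SimpleGraph.sup_adj]
  right
  rw [SimpleGraph.fromRel_adj]
  exact ⟨hvw, Or.inl hlt⟩

lemma tau_le_three (hk : 3 ≤ k) (G : SimpleGraph (Fin n)) :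
    runningTime (cliqueWithPendant k) G ≤ 3 := by
  set H := cliqueWithPendant k with hH
  by_cases h0 : bootStep H G = G
  · have h0mem : (0:ℕ) ∈ {t | bootProcess H G t = bootProcess H G (t + 1)} := by
      show bootProcess H G 0 = bootProcess H G 1
      show G = bootStep H (bootProcess H G 0)
      exact h0.symm
    exact le_trans (Nat.sInf_le h0mem) (by omega)
  · have hex : ∃ u v, (SimpleGraph.fromRel (fun u v =>
        numCopies H G < numCopies H (G ⊔ SimpleGraph.fromEdgeSet {s(u, v)}))).Adj u v ∧
        ¬ G.Adj u v := by
      by_contra hcon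
      push_neg at hcon
      apply h0
      rw [bootStep]
      apply sup_eq_left.2
      intro u v huv
      exact hcon u v huv
    obtain ⟨u, v, huv, hGuv⟩ := hex
    rw [SimpleGraph.fromRel_adj] at huv
    have hlt : numCopies H G < numCopies H (G ⊔ SimpleGraph.fromEdgeSet {s(u, v)}) := by
      rcases huv.2 with h | h
      · exact h
      · rwa [Sym2.eq_swap] at h
    obtain ⟨A, ⟨f⟩⟩ := exists_copy_of_numCopies_lt H hlt
    obtain ⟨g, hginj, hgadj⟩ := copy_embedding A f
    have hGe : G ⊔ SimpleGraph.fromEdgeSet {s(u, v)} ≤ bootStep H G := by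
      rw [bootStep]
      apply sup_le le_sup_left
      apply le_trans _ (le_sup_right)
      intro x y hxy
      rw [SimpleGraph.fromEdgeSet_adj] at hxy
      obtain ⟨hmem, hne⟩ := hxy
      rw [Set.mem_singleton_iff, Sym2.eq_iff] at hmem
      rw [SimpleGraph.fromRel_adj]
      refine ⟨hne, ?_⟩
      rcases hmem with ⟨rfl, rfl⟩ | ⟨rfl, rfl⟩
      · exact huv.2
      · exact huv.2.symm.imp (fun h => h) (fun h => h)
    set c : Fin k → Fin n := fun i => g ⟨i.val, by omega⟩ with hcdef
    have hc : Function.Injective c := by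
      intro a b hab
      have h2 := congrArg Fin.val (hginj hab)
      exact Fin.ext h2
    have hcl : ∀ i j, i ≠ j → (bootStep H G).Adj (c i) (c j) := by
      intro i j hij
      apply hGe
      apply hgadj
      apply H_adj_of_lt hk
      · intro h
        apply hij
        apply Fin.ext
        have h2 := congrArg Fin.val h
        exact h2
      · exact i.isLt
      · exact j.isLt
    have hG2 : ∀ (i : Fin k) (x : Fin n), x ≠ c i →
        (bootStep H (bootStep H G)).Adj (c i) x :=
      fun i x hx => step2 hk c hc hcl i x hx
    have hle12 : bootStep H G ≤ bootStep H (bootStep H G) := le_sup_left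
    have hG3 : bootStep H (bootStep H (bootStep H G)) = ⊤ :=
      step3 hk hle12 c hc hcl hG2
    have h3mem : 3 ∈ {t | bootProcess H G t = bootProcess H G (t + 1)} := by
      show bootProcess H G 3 = bootProcess H G 4
      have e3 : bootProcess H G 3 = ⊤ := by
        show bootStep H (bootStep H (bootStep H G)) = ⊤
        exact hG3
      have e4 : bootProcess H G 4 = ⊤ := by
        show bootStep H (bootProcess H G 3) = ⊤
        rw [e3, bootStep]
        exact top_sup_eq _
      rw [e3, e4]
    exact Nat.sInf_le h3mem

end Steps

/-- For `k ≥ 3`, the clique `K_k` with a pendant edge has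
`M_{H_k}(n) ≤ 3` for every `n`. -/
theorem maxRunningTime_cliqueWithPendant_le_three (k : ℕ) (hk : 3 ≤ k) (n : ℕ) :
    maxRunningTime (cliqueWithPendant k) n ≤ 3 := by
  apply csSup_le
  · exact ⟨runningTime (cliqueWithPendant k) (⊥ : SimpleGraph (Fin n)), ⟨⊥, rfl⟩⟩
  · rintro t ⟨G, rfl⟩
    exact tau_le_three hk G
end

section
/- For every t ≥ 2 and every n ∈ ℕ, the star T = K_{1,t−1} on t vertices satisfies M_T(n) ≤ t − 1. -/
open SimpleGraph

/-- The star `K_{1,t−1}` on `t` vertices, with centre `0`. -/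
def starGraph (t : ℕ) : SimpleGraph (Fin t) :=
  SimpleGraph.fromRel (fun u _ => u.val = 0)


/-! ### Auxiliary lemmas -/

/-- Rebuild a subgraph of `G` as a subgraph of `K` when its adjacency fits under `K`. -/
def transferSub {β : Type*} {G K : SimpleGraph β} (G' : G.Subgraph)
    (h : ∀ a b, G'.Adj a b → K.Adj a b) : K.Subgraph where
  verts := G'.verts
  Adj := G'.Adj
  adj_sub := fun hab => h _ _ hab
  edge_vert := fun hab => G'.edge_vert hab
  symm := G'.symm

lemma subgraph_finite {n : ℕ} (G : SimpleGraph (Fin n)) : Finite G.Subgraph := by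
  apply Finite.of_injective
    (fun G' : G.Subgraph => (G'.verts, {p : Fin n × Fin n | G'.Adj p.1 p.2}))
  intro A B hAB
  simp only [Prod.mk.injEq] at hAB
  ext x y
  · exact Set.ext_iff.1 hAB.1 x
  · exact Set.ext_iff.1 hAB.2 (x, y)

lemma starGraph_adj {t : ℕ} (a b : Fin t) :
    (_root_.starGraph t).Adj a b ↔ a ≠ b ∧ (a.val = 0 ∨ b.val = 0) := by
  simp [_root_.starGraph, fromRel_adj]

/-- degree of the centre of the star -/
lemma star_center_ncard {t : ℕ} (c : Fin t) (hc : c.val = 0) :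
    ((_root_.starGraph t).neighborSet c).ncard = t - 1 := by
  have : (_root_.starGraph t).neighborSet c = {c}ᶜ := by
    ext b
    simp only [mem_neighborSet, _root_.starGraph_adj, Set.mem_compl_iff, Set.mem_singleton_iff]
    constructor
    · rintro ⟨hne, -⟩ h; exact hne (h ▸ rfl)
    · intro h; exact ⟨fun he => h he.symm, Or.inl hc⟩
  rw [this]
  rw [← Nat.card_coe_set_eq, Nat.card_eq_fintype_card, Fintype.card_compl_set]
  simp

/-- If a graph is isomorphic to the star and a vertex maps to the centre,
its neighbourhood has `t-1` elements. -/
lemma center_ncard {t : ℕ} {V : Type*} {G' : SimpleGraph V} (φ : G' ≃g _root_.starGraph t)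
    (c : V) (hc : (φ c).val = 0) : (G'.neighborSet c).ncard = t - 1 := by
  rw [← star_center_ncard (φ c) hc, ← Nat.card_coe_set_eq, ← Nat.card_coe_set_eq]
  exact Nat.card_congr (φ.mapNeighborSet c)

/-- degree in a graph on `Fin n` -/
noncomputable def deg {n : ℕ} (G : SimpleGraph (Fin n)) (v : Fin n) : ℕ :=
  (G.neighborSet v).ncard

/-- If a subgraph copy of the star contains the edge `uv`,
then `u` or `v` has ambient degree at least `t-1`. -/
lemma deg_of_adj_copy {t n : ℕ} {G : SimpleGraph (Fin n)} (G' : G.Subgraph)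
    (φ : G'.coe ≃g _root_.starGraph t) {u v : Fin n} (h : G'.Adj u v) :
    t - 1 ≤ deg G u ∨ t - 1 ≤ deg G v := by
  set a : G'.verts := ⟨u, G'.edge_vert h⟩
  set b : G'.verts := ⟨v, G'.edge_vert h.symm⟩
  have hab : G'.coe.Adj a b := h
  have hstar := (starGraph_adj (φ a) (φ b)).1 (φ.map_adj_iff.2 hab)
  have key : ∀ (c : G'.verts), (φ c).val = 0 → t - 1 ≤ deg G c.val := by
    intro c hc
    have hcard := center_ncard φ c hc
    have hsub : Subtype.val '' (G'.coe.neighborSet c) ⊆ G.neighborSet c.val := by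
      rintro x ⟨y, hy, rfl⟩
      exact G'.adj_sub hy
    have : (Subtype.val '' (G'.coe.neighborSet c)).ncard = t - 1 := by
      rw [Set.ncard_image_of_injective _ Subtype.coe_injective, hcard]
    calc t - 1 = (Subtype.val '' (G'.coe.neighborSet c)).ncard := this.symm
      _ ≤ deg G c.val := Set.ncard_le_ncard hsub (Set.toFinite _)
  rcases hstar.2 with hc | hc
  · exact Or.inl (key a hc)
  · exact Or.inr (key b hc)

lemma neighborSet_sup_edge {n : ℕ} (G : SimpleGraph (Fin n)) (u v : Fin n) :
    (G ⊔ fromEdgeSet {s(u, v)}).neighborSet u ⊆ insert v (G.neighborSet u) := by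
  intro b hb
  rcases hb with hb | hb
  · exact Set.mem_insert_of_mem _ hb
  · rcases hb with ⟨hmem, hne⟩
    rw [Sym2.toRel_prop, Set.mem_singleton_iff, Sym2.eq_iff] at hmem
    rcases hmem with ⟨-, rfl⟩ | ⟨rfl, rfl⟩
    · exact Set.mem_insert _ _
    · exact absurd rfl hne

lemma deg_sup_edge_le {n : ℕ} (G : SimpleGraph (Fin n)) (u v : Fin n) :
    deg (G ⊔ fromEdgeSet {s(u, v)}) u ≤ deg G u + 1 :=
  le_trans (Set.ncard_le_ncard (neighborSet_sup_edge G u v) (Set.toFinite _))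
    (Set.ncard_insert_le _ _)

lemma numCopies_le_of_small_deg {t n : ℕ} (ht : 2 ≤ t) {G : SimpleGraph (Fin n)} {u v : Fin n}
    (hdu : deg G u < t - 2) (hdv : deg G v < t - 2) :
    numCopies (_root_.starGraph t) (G ⊔ fromEdgeSet {s(u, v)}) ≤ numCopies (_root_.starGraph t) G := by
  set K := G ⊔ fromEdgeSet {s(u, v)} with hK
  classical
  -- every copy in K has adjacency within G
  have key : ∀ G' : K.Subgraph, Nonempty (G'.coe ≃g _root_.starGraph t) →
      ∀ a b, G'.Adj a b → G.Adj a b := by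
    intro G' hne a b hab
    have hKab : K.Adj a b := G'.adj_sub hab
    rcases hKab with h | h
    · exact h
    · exfalso
      rcases h with ⟨hmem, hne'⟩
      obtain ⟨φ⟩ := hne
      rw [Sym2.toRel_prop, Set.mem_singleton_iff, Sym2.eq_iff] at hmem
      have hdegs : t - 1 ≤ deg K u ∨ t - 1 ≤ deg K v := by
        rcases hmem with ⟨rfl, rfl⟩ | ⟨rfl, rfl⟩
        · exact deg_of_adj_copy G' φ hab
        · exact (deg_of_adj_copy G' φ hab).symm
      have h1 : deg K u ≤ deg G u + 1 := deg_sup_edge_le G u v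
      have h2 : deg K v ≤ deg G v + 1 := by
        have : K = G ⊔ fromEdgeSet {s(v, u)} := by rw [hK, Sym2.eq_swap]
        rw [this]; exact deg_sup_edge_le G v u
      rcases hdegs with hd | hd <;> omega
  haveI : Finite G.Subgraph := subgraph_finite G
  haveI : Finite K.Subgraph := subgraph_finite K
  set f : K.Subgraph → G.Subgraph := fun G' =>
    if h : ∀ a b, G'.Adj a b → G.Adj a b then transferSub G' h else ⊥ with hf
  apply Set.ncard_le_ncard_of_injOn f
  · intro G' hG'
    have h := key G' hG'
    simp only [hf, dif_pos h]
    exact hG'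
  · intro G₁ h₁ G₂ h₂ heq
    simp only [hf, dif_pos (key G₁ h₁), dif_pos (key G₂ h₂)] at heq
    have hv := congrArg SimpleGraph.Subgraph.verts heq
    have ha := congrArg SimpleGraph.Subgraph.Adj heq
    ext x y
    · exact Set.ext_iff.1 hv x
    · exact iff_of_eq (congrFun (congrFun ha x) y)

lemma numCopies_lt_of_big_deg {t n : ℕ} (ht : 2 ≤ t) {G : SimpleGraph (Fin n)} {u v : Fin n}
    (huv : u ≠ v) (hnadj : ¬ G.Adj u v) (hdeg : t - 2 ≤ deg G u) :
    numCopies (_root_.starGraph t) G < numCopies (_root_.starGraph t) (G ⊔ fromEdgeSet {s(u, v)}) := by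
  classical
  set K := G ⊔ fromEdgeSet {s(u, v)} with hK
  haveI : Finite G.Subgraph := subgraph_finite G
  haveI : Finite K.Subgraph := subgraph_finite K
  haveI : NeZero t := ⟨by omega⟩
  -- the leaf set
  obtain ⟨S0, hS0sub, hS0card⟩ := Set.exists_subset_card_eq hdeg
  have hvS0 : v ∉ S0 := fun h => hnadj (hS0sub h)
  have huS0 : u ∉ S0 := fun h => (G.irrefl (hS0sub h))
  set T : Set (Fin n) := insert v S0 with hT
  have huT : u ∉ T := by
    rintro (h | h)
    · exact huv h
    · exact huS0 h
  have hTcard : T.ncard = t - 1 := by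
    rw [hT, Set.ncard_insert_of_notMem hvS0 (Set.toFinite _), hS0card]; omega
  have hVcard : (insert u T).ncard = t := by
    rw [Set.ncard_insert_of_notMem huT (Set.toFinite _), hTcard]; omega
  have hKuv : K.Adj u v := by
    rw [hK]
    exact (sup_adj _ _ _ _).mpr (Or.inr ((fromEdgeSet_adj _).mpr ⟨rfl, huv⟩))
  have hKS0 : ∀ b ∈ S0, K.Adj u b := fun b hb => by
    rw [hK]; exact (sup_adj _ _ _ _).mpr (Or.inl (hS0sub hb))
  -- the new star subgraph
  set Sstar : K.Subgraph :=
    { verts := insert u T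
      Adj := fun a b => (a = u ∧ b ∈ T) ∨ (b = u ∧ a ∈ T)
      adj_sub := by
        rintro a b (⟨rfl, hb⟩ | ⟨rfl, ha⟩)
        · rcases hb with rfl | hb
          · exact hKuv
          · exact hKS0 _ hb
        · rcases ha with rfl | ha
          · exact hKuv.symm
          · exact (hKS0 _ ha).symm
      edge_vert := by
        rintro a b (⟨rfl, hb⟩ | ⟨rfl, ha⟩)
        · exact Set.mem_insert _ _
        · exact Set.mem_insert_of_mem _ ha
      symm := by
        constructor
        rintro a b (⟨rfl, hb⟩ | ⟨rfl, ha⟩)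
        · exact Or.inr ⟨rfl, hb⟩
        · exact Or.inl ⟨rfl, ha⟩ } with hSstar
  -- the isomorphism with the star
  have hcardV : Nat.card ↥(insert u T) = t := by
    rw [Nat.card_coe_set_eq]; exact hVcard
  set u0 : ↥(insert u T) := ⟨u, Set.mem_insert _ _⟩ with hu0
  set e0 : ↥(insert u T) ≃ Fin t := Finite.equivFinOfCardEq hcardV with he0def
  set e : ↥(insert u T) ≃ Fin t := e0.trans (Equiv.swap (e0 u0) 0) with hedef
  have heu0 : e u0 = 0 := by
    simp [hedef, Equiv.swap_apply_left]
  have he_eq : ∀ a, e a = 0 ↔ a = u0 := by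
    intro a
    constructor
    · intro h; exact e.injective (h.trans heu0.symm)
    · rintro rfl; exact heu0
  have hiso : Nonempty (Sstar.coe ≃g _root_.starGraph t) := by
    refine ⟨{ toEquiv := e, map_rel_iff' := ?_ }⟩
    intro a b
    rw [_root_.starGraph_adj]
    have hval : ∀ c : Fin t, c.val = 0 ↔ c = 0 := fun c => by
      rw [Fin.ext_iff]; simp
    constructor
    · rintro ⟨hne, h0⟩
      have hab : a ≠ b := fun h => hne (by rw [h])
      rcases h0 with h0 | h0
      · have ha : a = u0 := (he_eq a).1 ((hval _).1 h0)
        have hbmem := b.2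
        have hbne : (b : Fin n) ≠ u := by
          intro h
          exact hab (ha.trans (Subtype.ext h).symm)
        have hbT : (b : Fin n) ∈ T := by
          rcases hbmem with h | h
          · exact absurd h hbne
          · exact h
        exact Or.inl ⟨congrArg Subtype.val ha, hbT⟩
      · have hb : b = u0 := (he_eq b).1 ((hval _).1 h0)
        have hane : (a : Fin n) ≠ u := fun h => hab ((Subtype.ext h).trans hb.symm)
        have haT : (a : Fin n) ∈ T := by
          rcases a.2 with h | h
          · exact absurd h hane
          · exact h
        exact Or.inr ⟨congrArg Subtype.val hb, haT⟩
    · rintro (⟨ha, hbT⟩ | ⟨hb, haT⟩)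
      · have ha' : a = u0 := Subtype.ext ha
        have hab : a ≠ b := by
          intro h
          rw [← h] at hbT
          rw [ha] at hbT
          exact huT hbT
        exact ⟨fun h => hab (e.injective h), Or.inl ((hval _).2 ((he_eq a).2 ha'))⟩
      · have hb' : b = u0 := Subtype.ext hb
        have hab : a ≠ b := by
          intro h
          rw [h] at haT
          rw [hb] at haT
          exact huT haT
        exact ⟨fun h => hab (e.injective h), Or.inr ((hval _).2 ((he_eq b).2 hb'))⟩
  -- counting
  set Φ : G.Subgraph → K.Subgraph := fun G' =>
    transferSub G' (fun a b hab => Or.inl (G'.adj_sub hab)) with hΦ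
  have hΦinj : Function.Injective Φ := by
    intro G₁ G₂ heq
    have hv := congrArg SimpleGraph.Subgraph.verts heq
    have ha := congrArg SimpleGraph.Subgraph.Adj heq
    ext x y
    · exact Set.ext_iff.1 hv x
    · exact iff_of_eq (congrFun (congrFun ha x) y)
  have himg : Φ '' {G' : G.Subgraph | Nonempty (G'.coe ≃g _root_.starGraph t)} ⊆
      {G' : K.Subgraph | Nonempty (G'.coe ≃g _root_.starGraph t)} := by
    rintro _ ⟨G', hG', rfl⟩
    exact hG'
  have hSadj : Sstar.Adj u v := Or.inl ⟨rfl, Set.mem_insert _ _⟩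
  have hSnot : Sstar ∉ Φ '' {G' : G.Subgraph | Nonempty (G'.coe ≃g _root_.starGraph t)} := by
    rintro ⟨G', -, heq⟩
    have := congrArg SimpleGraph.Subgraph.Adj heq
    have hadj : G'.Adj u v := by
      rw [show G'.Adj = Sstar.Adj from this]
      exact hSadj
    exact hnadj (G'.adj_sub hadj)
  have hss : Φ '' {G' : G.Subgraph | Nonempty (G'.coe ≃g _root_.starGraph t)} ⊂
      {G' : K.Subgraph | Nonempty (G'.coe ≃g _root_.starGraph t)} :=
    ⟨himg, fun h => hSnot (h hiso)⟩
  calc numCopies (_root_.starGraph t) G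
      = (Φ '' {G' : G.Subgraph | Nonempty (G'.coe ≃g _root_.starGraph t)}).ncard :=
        (Set.ncard_image_of_injective _ hΦinj).symm
    _ < numCopies (_root_.starGraph t) K := Set.ncard_lt_ncard hss (Set.toFinite _)

lemma add_iff {t n : ℕ} (ht : 2 ≤ t) {G : SimpleGraph (Fin n)} {a b : Fin n}
    (hab : a ≠ b) (hnadj : ¬ G.Adj a b) :
    (numCopies (_root_.starGraph t) G < numCopies (_root_.starGraph t) (G ⊔ fromEdgeSet {s(a, b)})) ↔
      (t - 2 ≤ deg G a ∨ t - 2 ≤ deg G b) := by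
  constructor
  · intro h
    by_contra hc
    push_neg at hc
    exact absurd h (not_lt.mpr (numCopies_le_of_small_deg ht hc.1 hc.2))
  · rintro (h | h)
    · exact numCopies_lt_of_big_deg ht hab hnadj h
    · rw [Sym2.eq_swap]
      exact numCopies_lt_of_big_deg ht hab.symm (fun h' => hnadj h'.symm) h

lemma bootStep_star_eq {t n : ℕ} (ht : 2 ≤ t) (G : SimpleGraph (Fin n)) :
    bootStep (_root_.starGraph t) G = G ⊔ fromRel (fun a _ => t - 2 ≤ deg G a) := by
  ext a b
  simp only [bootStep, sup_adj, fromRel_adj]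
  by_cases hG : G.Adj a b
  · simp [hG]
  · by_cases hab : a = b
    · subst hab; simp
    · have h1 := add_iff ht hab hG
      have h2 := add_iff ht (Ne.symm hab) (fun h => hG h.symm)
      simp only [hG, false_or]
      constructor
      · rintro ⟨hne, h | h⟩
        · exact ⟨hne, h1.1 h⟩
        · exact ⟨hne, (h2.1 h).symm⟩
      · rintro ⟨hne, h⟩
        exact ⟨hne, Or.inl (h1.2 h)⟩

lemma deg_mono {n : ℕ} {G K : SimpleGraph (Fin n)} (h : G ≤ K) (v : Fin n) :
    deg G v ≤ deg K v :=
  Set.ncard_le_ncard (fun w hw => h hw) (Set.toFinite _)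

lemma exists_stab {t n : ℕ} (ht : 2 ≤ t) (G0 : SimpleGraph (Fin n)) : ∃ j ≤ t - 1,
    bootProcess (_root_.starGraph t) G0 j = bootProcess (_root_.starGraph t) G0 (j + 1) := by
  set P := bootProcess (_root_.starGraph t) G0 with hP
  have hPsucc : ∀ i, P (i + 1) = P i ⊔ fromRel (fun a _ => t - 2 ≤ deg (P i) a) :=
    fun i => bootStep_star_eq ht (P i)
  have hmono : ∀ i, P i ≤ P (i + 1) := fun i => by rw [hPsucc i]; exact le_sup_left
  have claim1 : ∀ i v w, t - 2 ≤ deg (P i) v → w ≠ v → (P (i + 1)).Adj v w := by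
    intro i v w hv hw
    rw [hPsucc i]
    exact Or.inr ((fromRel_adj _ _ _).mpr ⟨Ne.symm hw, Or.inl hv⟩)
  by_cases hA : ∃ i ≤ t - 2, ∀ v, t - 2 ≤ deg (P i) v → ∀ w, w ≠ v → (P i).Adj v w
  · obtain ⟨i, hi, hjoined⟩ := hA
    refine ⟨i, by omega, ?_⟩
    rw [hPsucc i]
    refine (sup_eq_left.mpr ?_).symm
    intro a b hab
    rcases (fromRel_adj _ _ _).mp hab with ⟨hne, h | h⟩
    · exact hjoined a h b (Ne.symm hne)
    · exact (hjoined b h a hne).symm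
  · push_neg at hA
    set D : ℕ → Set (Fin n) := fun i => {v | t - 2 ≤ deg (P i) v} with hD
    have hDmono : ∀ i, D i ⊆ D (i + 1) := fun i v hv =>
      le_trans hv (deg_mono (hmono i) v)
    have subclaim : ∀ i, i ≤ t - 2 → i + 1 ≤ (D i).ncard := by
      intro i
      induction i with
      | zero =>
        intro hi
        obtain ⟨v, hv, -⟩ := hA 0 (Nat.zero_le _)
        exact (Set.ncard_pos (Set.toFinite _)).mpr ⟨v, hv⟩
      | succ i IH =>
        intro hi
        have prev := IH (by omega)
        obtain ⟨v, hv, w, hw, hnadj⟩ := hA (i + 1) hi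
        have hvnot : v ∉ D i := fun h => hnadj (claim1 i v w h hw)
        have hstrict : D i ⊂ D (i + 1) := ⟨hDmono i, fun h => hvnot (h hv)⟩
        have := Set.ncard_lt_ncard hstrict (Set.toFinite _)
        omega
    have huniv : ∀ v, v ∈ D (t - 2) := by
      intro v
      by_cases h2 : t ≤ 2
      · have : t - 2 = 0 := by omega
        simp only [hD, Set.mem_setOf_eq, this]
        exact Nat.zero_le _
      · by_contra hv
        have h32 : t - 3 + 1 = t - 2 := by omega
        have hvnot3 : v ∉ D (t - 3) := fun h => hv (h32 ▸ hDmono (t - 3) h)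
        have hsubN : D (t - 3) ⊆ (P (t - 2)).neighborSet v := by
          intro w hw
          have hwv : v ≠ w := fun h => hvnot3 (h ▸ hw)
          have := claim1 (t - 3) w v hw hwv
          rw [h32] at this
          exact this.symm
        have h1 : (D (t - 3)).ncard ≤ deg (P (t - 2)) v :=
          Set.ncard_le_ncard hsubN (Set.toFinite _)
        have h2' := subclaim (t - 3) (by omega)
        exact hv (by simp only [hD, Set.mem_setOf_eq]; omega)
    refine ⟨t - 1, le_refl _, ?_⟩
    have htop : P (t - 1) = ⊤ := by
      have h21 : t - 2 + 1 = t - 1 := by omega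
      apply le_antisymm le_top
      intro a b hab
      have : (P (t - 2 + 1)).Adj a b := by
        rw [hPsucc (t - 2)]
        exact Or.inr ((fromRel_adj _ _ _).mpr ⟨hab.ne, Or.inl (huniv a)⟩)
      rw [h21] at this
      exact this
    have htop2 : P (t - 1 + 1) = ⊤ := by
      rw [hPsucc (t - 1), htop, top_sup_eq]
    rw [htop, htop2]

/-- For every `t ≥ 2` and every `n`, the star `K_{1,t−1}` satisfies
`M_{K_{1,t−1}}(n) ≤ t − 1`. -/
theorem maxRunningTime_star_le (t : ℕ) (ht : 2 ≤ t) (n : ℕ) :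
    maxRunningTime (_root_.starGraph t) n ≤ t - 1 := by
  refine csSup_le ⟨runningTime (_root_.starGraph t) (⊥ : SimpleGraph (Fin n)), ⊥, rfl⟩ ?_
  rintro x ⟨G, rfl⟩
  obtain ⟨j, hj, hstab⟩ := exists_stab ht G
  exact le_trans (Nat.sInf_le hstab) hj
end

section
/- Let T be a tree and let z ∈ V(T) be a vertex that is not a leaf. Then there exists a subset U ⊆ V(T) such that: (1) U is a vertex cover of T of minimum size; (2) no vertex of U is a leaf of T; (3) a vertex v ∈ V(T) lies in U if and only if v has a child (with respect to the root z) that is not contained in U. -/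
open SimpleGraph

noncomputable def inU {V : Type} [Fintype V] (T : SimpleGraph V) (z : V) (v : V) : Prop :=
  ∃ w, ∃ _ : T.Adj v w, ∃ _ : T.dist z v < T.dist z w, ¬ inU T z w
termination_by Fintype.card V - T.dist z v
decreasing_by
  have hr : T.Reachable z w := SimpleGraph.Reachable.of_dist_ne_zero (by omega)
  obtain ⟨p, hp, hl⟩ := hr.exists_path_of_dist
  have := hp.length_lt
  omega

lemma inU_iff {V : Type} [Fintype V] (T : SimpleGraph V) (z v : V) :
    inU T z v ↔ ∃ w : V, T.Adj v w ∧ T.dist z v < T.dist z w ∧ ¬ inU T z w := by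
  rw [inU]
  tauto

lemma dist_add_dist_le {V : Type} {T : SimpleGraph V} {z u w : V}
    (p : T.Walk z u) (h : w ∈ p.support) : T.dist z w + T.dist w u ≤ p.length := by
  classical
  have h1 := T.dist_le (p.takeUntil w h)
  have h2 := T.dist_le (p.dropUntil w h)
  have h3 : (p.takeUntil w h).length + (p.dropUntil w h).length = p.length := by
    rw [← SimpleGraph.Walk.length_append, SimpleGraph.Walk.take_spec]
  omega

lemma dist_add_dist_le' {V : Type} {T : SimpleGraph V} {z u w : V}
    (p : T.Walk z u) (h : w ∈ p.support) : T.dist z w + T.dist w u ≤ p.length := by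
  classical
  have h1 := T.dist_le (p.takeUntil w h)
  have h2 := T.dist_le (p.dropUntil w h)
  have h3 : (p.takeUntil w h).length + (p.dropUntil w h).length = p.length := by
    rw [← SimpleGraph.Walk.length_append, SimpleGraph.Walk.take_spec]
  omega

lemma unique_parent {V : Type} {T : SimpleGraph V} (hT : T.IsTree) {z u u' c : V}
    (h : T.Adj u c) (h' : T.Adj u' c)
    (hu : T.dist z u < T.dist z c) (hu' : T.dist z u' < T.dist z c) : u = u' := by
  obtain ⟨p, hp, hl⟩ := hT.isConnected.exists_path_of_dist z u
  obtain ⟨p', hp', hl'⟩ := hT.isConnected.exists_path_of_dist z u'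
  have hc : c ∉ p.support := by
    intro hmem
    have := dist_add_dist_le' p hmem
    omega
  have hc' : c ∉ p'.support := by
    intro hmem
    have := dist_add_dist_le' p' hmem
    omega
  have q1path : (SimpleGraph.Walk.cons h.symm p.reverse).IsPath := by
    rw [SimpleGraph.Walk.cons_isPath_iff]
    refine ⟨hp.reverse, ?_⟩
    rwa [SimpleGraph.Walk.support_reverse, List.mem_reverse]
  have q2path : (SimpleGraph.Walk.cons h'.symm p'.reverse).IsPath := by
    rw [SimpleGraph.Walk.cons_isPath_iff]
    refine ⟨hp'.reverse, ?_⟩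
    rwa [SimpleGraph.Walk.support_reverse, List.mem_reverse]
  have huniq := (hT.existsUnique_path c z).unique q1path q2path
  have hs := congrArg SimpleGraph.Walk.support huniq
  rw [SimpleGraph.Walk.support_cons, SimpleGraph.Walk.support_cons,
    p.reverse.support_eq_cons, p'.reverse.support_eq_cons] at hs
  simp only [List.cons.injEq] at hs
  exact hs.2.1

lemma adj_dist_ne {V : Type} {T : SimpleGraph V} (hT : T.IsTree) {z u v : V}
    (h : T.Adj u v) : T.dist z u ≠ T.dist z v := by
  intro he
  obtain ⟨p, hp, hl⟩ := hT.isConnected.exists_path_of_dist z u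
  have hv : v ∉ p.support := by
    intro hmem
    have h1 := dist_add_dist_le' p hmem
    have h2 : T.dist v u = 0 := by omega
    have := (h.symm.reachable.dist_eq_zero_iff).mp h2
    exact h.ne' this
  obtain ⟨p', hp', hl'⟩ := hT.isConnected.exists_path_of_dist z v
  have q1path : (SimpleGraph.Walk.cons h.symm p.reverse).IsPath := by
    rw [SimpleGraph.Walk.cons_isPath_iff]
    exact ⟨hp.reverse, by rwa [SimpleGraph.Walk.support_reverse, List.mem_reverse]⟩
  have huniq := (hT.existsUnique_path v z).unique q1path hp'.reverse
  have hlen := congrArg SimpleGraph.Walk.length huniq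
  rw [SimpleGraph.Walk.length_cons, SimpleGraph.Walk.length_reverse,
    SimpleGraph.Walk.length_reverse] at hlen
  omega

lemma exists_parent {V : Type} {T : SimpleGraph V} (hT : T.IsTree) {z u : V}
    (hu : u ≠ z) : ∃ w, T.Adj u w ∧ T.dist z w < T.dist z u := by
  have hd : 0 < T.dist z u := hT.isConnected.pos_dist_of_ne (Ne.symm hu)
  obtain ⟨p, hp, hl⟩ := hT.isConnected.exists_path_of_dist z u
  obtain ⟨w, ha, q, hq⟩ := SimpleGraph.Walk.exists_eq_cons_of_ne hu p.reverse
  refine ⟨w, ha, ?_⟩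
  have hlq : q.length = T.dist z u - 1 := by
    have := congrArg SimpleGraph.Walk.length hq
    rw [SimpleGraph.Walk.length_reverse, SimpleGraph.Walk.length_cons] at this
    omega
  have : T.dist w z ≤ q.length := T.dist_le q
  rw [SimpleGraph.dist_comm] at this
  omega

/-- In a tree `T` rooted at a non-leaf `z` there is a minimum vertex
cover `U` containing no leaf, such that a vertex lies in `U` iff it has a child
(w.r.t. the root `z`) outside `U`. -/
theorem exists_good_vertex_cover {V : Type} [Fintype V] (T : SimpleGraph V)
    (hT : T.IsTree) (z : V) (hz : (T.neighborSet z).ncard ≠ 1) :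
    ∃ U : Set V,
      ((∀ u v : V, T.Adj u v → u ∈ U ∨ v ∈ U) ∧
        ∀ W : Set V, (∀ u v : V, T.Adj u v → u ∈ W ∨ v ∈ W) → U.ncard ≤ W.ncard) ∧
      (∀ u ∈ U, (T.neighborSet u).ncard ≠ 1) ∧
      (∀ v : V, v ∈ U ↔ ∃ w : V, T.Adj v w ∧ T.dist z v < T.dist z w ∧ w ∉ U) := by
  classical
  refine ⟨{v | inU T z v}, ⟨?_, ?_⟩, ?_, fun v => inU_iff T z v⟩
  · -- vertex cover
    intro u v huv
    rcases lt_or_gt_of_ne (adj_dist_ne hT huv) with h | h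
    · by_cases hv : inU T z v
      · exact Or.inr hv
      · exact Or.inl ((inU_iff T z u).mpr ⟨v, huv, h, hv⟩)
    · by_cases hu : inU T z u
      · exact Or.inl hu
      · exact Or.inr ((inU_iff T z v).mpr ⟨u, huv.symm, h, hu⟩)
  · -- minimality
    intro W hW
    have hchoice : ∀ u ∈ {v | inU T z v}, ∃ w : V,
        T.Adj u w ∧ T.dist z u < T.dist z w ∧ ¬ inU T z w :=
      fun u hu => (inU_iff T z u).mp hu
    choose! c h1 h2 h3 using hchoice
    set f : V → V := fun u => if u ∈ W then u else c u with hf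
    have hmaps : Set.MapsTo f {v | inU T z v} W := by
      intro u hu
      by_cases huW : u ∈ W
      · simp [hf, huW]
      · have := hW u (c u) (h1 u hu)
        simp only [hf, huW, if_false]
        tauto
    have hinj : Set.InjOn f {v | inU T z v} := by
      intro u hu u' hu' he
      by_cases huW : u ∈ W <;> by_cases huW' : u' ∈ W <;>
        simp only [hf, huW, huW', if_true, if_false] at he
      · exact he
      · exact absurd (he ▸ hu) (h3 u' hu')
      · exact absurd (he ▸ hu') (h3 u hu)
      · have h1u := h1 u hu
        have h2u := h2 u hu
        rw [he] at h1u h2u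
        exact unique_parent hT h1u (h1 u' hu') h2u (h2 u' hu')
    exact Set.ncard_le_ncard_of_injOn f hmaps hinj (Set.toFinite W)
  · -- no leaves
    intro u hu
    obtain ⟨w, hw, hdw, -⟩ := (inU_iff T z u).mp hu
    by_cases huz : u = z
    · exact huz ▸ hz
    · obtain ⟨p, hp, hdp⟩ := exists_parent hT huz
      have hpw : p ≠ w := fun he => by subst he; omega
      have hsub : ({w, p} : Set V) ⊆ T.neighborSet u := by
        intro x hx
        rcases hx with rfl | rfl
        · exact hw
        · exact hp
      have h2le : 2 ≤ (T.neighborSet u).ncard := by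
        have := Set.ncard_le_ncard hsub (Set.toFinite _)
        rwa [Set.ncard_pair (Ne.symm hpw)] at this
      omega
end

section
/- Fix s ≥ 3 and let (G_i)_{i≥0} be the K_{2,s}-bootstrap process on an n-vertex graph G with n ≥ s + 2, and let τ := τ_{K_{2,s}}(G). Suppose 0 ≤ i ≤ τ − 4 and P is a partition of V(G) such that any two vertices lying in the same block of P have at least s − 1 common neighbours in G_i. Then there exist two distinct blocks A, B ∈ P such that in the partition (P \ {A, B}) ∪ {A ∪ B}, any two vertices lying in the same block have at least s − 1 common neighbours in G_{i+4}. -/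
open SimpleGraph

section Aux

set_option linter.unusedSectionVars false
set_option maxHeartbeats 1000000

variable {V : Type} [Fintype V] {s : ℕ} {α : Type*}

instance sgFinite (G : SimpleGraph V) : Finite G.Subgraph := by
  have : Function.Injective (fun (Γ : G.Subgraph) => (Γ.verts, Γ.Adj)) := by
    intro a b h
    simp only [Prod.mk.injEq] at h
    exact SimpleGraph.Subgraph.ext h.1 h.2
  exact Finite.of_injective _ this

/-- inclusion of subgraphs along `G ≤ G₂` -/
def sgIncl {G G₂ : SimpleGraph V} (h : G ≤ G₂) (Γ : G.Subgraph) : G₂.Subgraph where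
  verts := Γ.verts
  Adj := Γ.Adj
  adj_sub := fun ha => h (Γ.adj_sub ha)
  edge_vert := Γ.edge_vert
  symm := Γ.symm

lemma sgIncl_inj {G G₂ : SimpleGraph V} (h : G ≤ G₂) : Function.Injective (sgIncl h) := by
  intro a b hab
  have h1 : (sgIncl h a).verts = (sgIncl h b).verts := by rw [hab]
  have h2 : (sgIncl h a).Adj = (sgIncl h b).Adj := by rw [hab]
  exact SimpleGraph.Subgraph.ext h1 h2

lemma sgIncl_coe {G G₂ : SimpleGraph V} (h : G ≤ G₂) (Γ : G.Subgraph) :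
    (sgIncl h Γ).coe = Γ.coe := rfl

/-- if `G₂` has a copy of `H` using an edge not in `G ≤ G₂`, then strictly more copies. -/
lemma numCopies_lt (H : SimpleGraph α) {G G₂ : SimpleGraph V} (hle : G ≤ G₂)
    (Γ : G₂.Subgraph) (hiso : Nonempty (Γ.coe ≃g H)) {a b : V}
    (hab : Γ.Adj a b) (hnab : ¬ G.Adj a b) :
    numCopies H G < numCopies H G₂ := by
  classical
  set S₁ := {G' : G.Subgraph | Nonempty (G'.coe ≃g H)} with hS₁
  set S₂ := {G' : G₂.Subgraph | Nonempty (G'.coe ≃g H)} with hS₂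
  have himg : (sgIncl hle) '' S₁ ⊆ S₂ := by
    rintro x ⟨y, hy, rfl⟩
    exact hy
  have hΓS₂ : Γ ∈ S₂ := hiso
  have hΓnot : Γ ∉ (sgIncl hle) '' S₁ := by
    rintro ⟨y, _, rfl⟩
    exact hnab (y.adj_sub hab)
  have hss : (sgIncl hle) '' S₁ ⊂ S₂ := ⟨himg, fun hsub => hΓnot (hsub hΓS₂)⟩
  calc numCopies H G = ((sgIncl hle) '' S₁).ncard :=
        (Set.ncard_image_of_injective _ (sgIncl_inj hle)).symm
    _ < S₂.ncard := Set.ncard_lt_ncard hss (Set.toFinite _)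

lemma exists_new_copy (H : SimpleGraph α) {G G₂ : SimpleGraph V} (hle : G ≤ G₂)
    (hlt : numCopies H G < numCopies H G₂) :
    ∃ Γ : G₂.Subgraph, Nonempty (Γ.coe ≃g H) ∧ ∃ a b : V, Γ.Adj a b ∧ ¬ G.Adj a b := by
  classical
  set S₁ := {G' : G.Subgraph | Nonempty (G'.coe ≃g H)} with hS₁
  set S₂ := {G' : G₂.Subgraph | Nonempty (G'.coe ≃g H)} with hS₂
  by_contra hcon
  push_neg at hcon
  have hsub : S₂ ⊆ (sgIncl hle) '' S₁ := by
    intro Γ hΓ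
    have hadj : ∀ ⦃x y : V⦄, Γ.Adj x y → G.Adj x y := by
      intro x y hxy
      exact hcon Γ hΓ x y hxy
    refine ⟨⟨Γ.verts, Γ.Adj, fun h => hadj h, Γ.edge_vert, Γ.symm⟩, ?_, ?_⟩
    · exact hΓ
    · rfl
  have : numCopies H G₂ ≤ numCopies H G := by
    calc S₂.ncard ≤ ((sgIncl hle) '' S₁).ncard := Set.ncard_le_ncard hsub (Set.toFinite _)
      _ = S₁.ncard := Set.ncard_image_of_injective _ (sgIncl_inj hle)
  omega

/-- Build an explicit `K_{2,s}` copy inside `G₂`. -/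
lemma copy_exists (G₂ : SimpleGraph V) (p q : V) (T₀ : Finset V)
    (hC : T₀.card = s) (hpq : p ≠ q) (hpT : p ∉ T₀) (hqT : q ∉ T₀)
    (hadj : ∀ x ∈ T₀, G₂.Adj p x ∧ G₂.Adj q x) :
    ∃ Γ : G₂.Subgraph, Nonempty (Γ.coe ≃g completeBipartiteGraph (Fin 2) (Fin s)) ∧
      ∀ x ∈ T₀, Γ.Adj p x := by
  classical
  set L : Finset V := {p, q} with hL
  have hLT : ∀ x, x ∈ L → x ∉ T₀ := by
    intro x hx
    rcases Finset.mem_insert.mp hx with rfl | hx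
    · exact hpT
    · rcases Finset.mem_singleton.mp hx with rfl; exact hqT
  have hadj' : ∀ x ∈ L, ∀ y ∈ T₀, G₂.Adj x y := by
    intro x hx y hy
    rcases Finset.mem_insert.mp hx with rfl | hx
    · exact (hadj y hy).1
    · rcases Finset.mem_singleton.mp hx with rfl; exact (hadj y hy).2
  refine ⟨⟨↑(L ∪ T₀), fun x y => (x ∈ L ∧ y ∈ T₀) ∨ (x ∈ T₀ ∧ y ∈ L), ?_, ?_, ?_⟩, ?_, ?_⟩
  · rintro x y (⟨hx, hy⟩ | ⟨hx, hy⟩)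
    · exact hadj' x hx y hy
    · exact (hadj' y hy x hx).symm
  · rintro x y (⟨hx, _⟩ | ⟨hx, _⟩) <;>
      simp [Finset.mem_union, hx]
  · constructor <;> rintro x y (⟨hx, hy⟩ | ⟨hx, hy⟩)
    · exact Or.inr ⟨hy, hx⟩
    · exact Or.inl ⟨hy, hx⟩
  · -- the isomorphism
    set f : Fin 2 ⊕ Fin s → V :=
      Sum.elim (fun i => if i = 0 then p else q)
        (fun k => (T₀.equivFin.symm (finCongr hC.symm k) : V)) with hf
    have hfl : ∀ i, f (Sum.inl i) ∈ L := by
      intro i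
      by_cases h : i = 0 <;> simp [hf, h, hL]
    have hfr : ∀ k, f (Sum.inr k) ∈ T₀ := by
      intro k; simp [hf]
    have hinj : Function.Injective f := by
      rintro (i | k) (j | l) h
      · simp only [hf, Sum.elim_inl] at h
        fin_cases i <;> fin_cases j <;> simp_all
      · exact absurd (show f (Sum.inl i) ∈ T₀ by rw [h]; exact hfr l) (hLT _ (hfl i))
      · exact absurd (show f (Sum.inl j) ∈ T₀ by rw [← h]; exact hfr k) (hLT _ (hfl j))
      · simp only [hf, Sum.elim_inr] at h
        have h2 := T₀.equivFin.symm.injective (Subtype.coe_injective h)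
        exact congrArg Sum.inr (by simpa using congrArg (finCongr hC) h2)
    have hrange : Set.range f = ↑(L ∪ T₀) := by
      apply Set.eq_of_subset_of_subset
      · rintro x ⟨(i | k), rfl⟩
        · simp [Finset.mem_union, hfl i]
        · simp [Finset.mem_union, hfr k]
      · intro x hx
        rcases Finset.mem_union.mp (by simpa using hx) with hx | hx
        · rcases Finset.mem_insert.mp hx with rfl | hx
          · exact ⟨Sum.inl 0, by simp [hf]⟩
          · rcases Finset.mem_singleton.mp hx with rfl
            exact ⟨Sum.inl 1, by simp [hf]⟩
        · refine ⟨Sum.inr (finCongr hC (T₀.equivFin ⟨x, hx⟩)), ?_⟩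
          simp [hf]
    set e := (Equiv.ofInjective f hinj).trans (Equiv.setCongr hrange) with he
    have hev : ∀ a, ((e a : ↑(L ∪ T₀)) : V) = f a := by
      intro a; rfl
    refine ⟨(RelIso.mk e ?_).symm⟩
    rintro (i | k) (j | l)
    · refine iff_of_false ?_ (by simp)
      rw [SimpleGraph.Subgraph.coe_adj, hev, hev]
      rintro (⟨-, h2⟩ | ⟨h1, -⟩)
      · exact hLT _ (hfl j) h2
      · exact hLT _ (hfl i) h1
    · refine iff_of_true ?_ (by simp)
      rw [SimpleGraph.Subgraph.coe_adj, hev, hev]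
      exact Or.inl ⟨hfl i, hfr l⟩
    · refine iff_of_true ?_ (by simp)
      rw [SimpleGraph.Subgraph.coe_adj, hev, hev]
      exact Or.inr ⟨hfr k, hfl j⟩
    · refine iff_of_false ?_ (by simp)
      rw [SimpleGraph.Subgraph.coe_adj, hev, hev]
      rintro (⟨h1, -⟩ | ⟨-, h2⟩)
      · exact hLT _ h1 (hfr k)
      · exact hLT _ h2 (hfr l)
  · intro x hx
    exact Or.inl ⟨by simp [hL], hx⟩

lemma copy_dissect {G₂ : SimpleGraph V} (Γ : G₂.Subgraph)
    (φ : Γ.coe ≃g completeBipartiteGraph (Fin 2) (Fin s)) {a b : V} (hab : Γ.Adj a b) :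
    ∃ ε₁ ε₂ w : V, ∃ T : Finset V, ((ε₁ = a ∧ ε₂ = b) ∨ (ε₁ = b ∧ ε₂ = a)) ∧
      T.card = s ∧ ε₂ ∈ T ∧ ε₁ ∉ T ∧ w ∉ T ∧ w ≠ ε₁ ∧
      (∀ x ∈ T, Γ.Adj ε₁ x ∧ Γ.Adj w x) := by
  classical
  set a' : Γ.verts := ⟨a, Γ.edge_vert hab⟩ with ha'
  set b' : Γ.verts := ⟨b, Γ.edge_vert hab.symm⟩ with hb'
  have hadj' : Γ.coe.Adj a' b' := hab
  have hK : (completeBipartiteGraph (Fin 2) (Fin s)).Adj (φ a') (φ b') :=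
    φ.map_rel_iff.mpr hadj'
  have main : ∀ (u v : V) (hu : u ∈ Γ.verts) (hv : v ∈ Γ.verts) (i : Fin 2) (l : Fin s),
      φ ⟨u, hu⟩ = Sum.inl i → φ ⟨v, hv⟩ = Sum.inr l →
      ∃ w : V, ∃ T : Finset V,
      T.card = s ∧ v ∈ T ∧ u ∉ T ∧ w ∉ T ∧ w ≠ u ∧
      (∀ x ∈ T, Γ.Adj u x ∧ Γ.Adj w x) := by
    intro u v hu hv i l hφu hφv
    set oi : Fin 2 := if i = 0 then 1 else 0 with hoi
    have hoine : oi ≠ i := by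
      by_cases h : i = 0 <;> simp [hoi, h]
      · omega
    set w := (↑(φ.symm (Sum.inl oi)) : V) with hw
    set T : Finset V := Finset.univ.image (fun k : Fin s => (↑(φ.symm (Sum.inr k)) : V))
      with hT
    have hproj : ∀ (z : V) (hz : z ∈ Γ.verts) (m : Fin 2 ⊕ Fin s),
        φ ⟨z, hz⟩ = m → z = ↑(φ.symm m) := by
      intro z hz m hm
      rw [← hm]; simp
    have hTmem : ∀ x : V, x ∈ T ↔ ∃ k : Fin s, (↑(φ.symm (Sum.inr k)) : V) = x := by
      intro x; simp [hT]
    refine ⟨w, T, ?_, ?_, ?_, ?_, ?_, ?_⟩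
    · rw [hT, Finset.card_image_of_injective _ ?_, Finset.card_univ, Fintype.card_fin]
      intro k₁ k₂ h
      have := φ.symm.injective (Subtype.coe_injective h)
      simpa using this
    · exact (hTmem v).mpr ⟨l, (hproj v hv _ hφv).symm⟩
    · intro hmem
      obtain ⟨k, hk⟩ := (hTmem u).mp hmem
      have : φ.symm (Sum.inr k) = ⟨u, hu⟩ := Subtype.coe_injective hk
      have h2 := congrArg φ this
      simp only [RelIso.apply_symm_apply, hφu] at h2
      exact absurd h2 (by simp)
    · intro hmem
      obtain ⟨k, hk⟩ := (hTmem w).mp hmem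
      have : φ.symm (Sum.inr k) = φ.symm (Sum.inl oi) := Subtype.coe_injective hk
      have := φ.symm.injective this
      exact absurd this (by simp)
    · intro h
      have : φ.symm (Sum.inl oi) = ⟨u, hu⟩ := Subtype.coe_injective h
      have h2 := congrArg φ this
      simp only [RelIso.apply_symm_apply, hφu] at h2
      exact hoine (by simpa using h2)
    · intro x hx
      obtain ⟨k, hk⟩ := (hTmem x).mp hx
      constructor
      · have hKadj : (completeBipartiteGraph (Fin 2) (Fin s)).Adj (Sum.inl i) (Sum.inr k) :=
          by simp
        have hthis := φ.symm.map_rel_iff.mpr hKadj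
        rw [← hφu] at hthis
        simp only [RelIso.symm_apply_apply] at hthis
        have h2 : Γ.Adj u ↑(φ.symm (Sum.inr k)) := hthis
        rwa [hk] at h2
      · have hKadj : (completeBipartiteGraph (Fin 2) (Fin s)).Adj (Sum.inl oi) (Sum.inr k) :=
          by simp
        have := φ.symm.map_rel_iff.mpr hKadj
        have h2 : Γ.Adj w ↑(φ.symm (Sum.inr k)) := this
        rwa [hk] at h2
  rcases hφa : φ a' with i | k <;> rcases hφb : φ b' with j | l
  · rw [hφa, hφb] at hK; simp at hK
  · obtain ⟨w, T, h1, h2, h3, h4, h5, h6⟩ := main a b a'.2 b'.2 i l hφa hφb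
    exact ⟨a, b, w, T, Or.inl ⟨rfl, rfl⟩, h1, h2, h3, h4, h5, h6⟩
  · obtain ⟨w, T, h1, h2, h3, h4, h5, h6⟩ := main b a b'.2 a'.2 j k hφb hφa
    exact ⟨b, a, w, T, Or.inr ⟨rfl, rfl⟩, h1, h2, h3, h4, h5, h6⟩
  · rw [hφa, hφb] at hK; simp at hK

/-- A new copy created by adding the single edge `{c,d}` yields the trace structure. -/
lemma trace_core (G' : SimpleGraph V) (c d : V) (hcd : c ≠ d) (hnadj : ¬ G'.Adj c d)
    (hlt : numCopies (completeBipartiteGraph (Fin 2) (Fin s)) G' <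
      numCopies (completeBipartiteGraph (Fin 2) (Fin s)) (G' ⊔ fromEdgeSet {s(c, d)})) :
    ∃ ε₁ ε₂ w : V, ∃ T : Finset V, ((ε₁ = c ∧ ε₂ = d) ∨ (ε₁ = d ∧ ε₂ = c)) ∧
      T.card = s ∧ ε₂ ∈ T ∧ ε₁ ∉ T ∧ w ∉ T ∧ w ≠ ε₁ ∧
      (∀ x ∈ T, G'.Adj w x) ∧ (∀ x ∈ T, x ≠ ε₂ → G'.Adj ε₁ x) := by
  classical
  obtain ⟨Γ, ⟨φ⟩, a, b, hab, hnab⟩ := exists_new_copy _ le_sup_left hlt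
  have hG₂ : (G' ⊔ fromEdgeSet {s(c, d)}).Adj a b := Γ.adj_sub hab
  have hpair : s(a, b) = s(c, d) := by
    rcases (sup_adj _ _ _ _).mp hG₂ with h | h
    · exact absurd h hnab
    · rw [fromEdgeSet_adj] at h
      simpa using h.1
  obtain ⟨ε₁, ε₂, w, T, hperm, hcard, hmem, h1T, hwT, hwe, hadjs⟩ := copy_dissect Γ φ hab
  have hperm' : (ε₁ = c ∧ ε₂ = d) ∨ (ε₁ = d ∧ ε₂ = c) := by
    rcases Sym2.eq_iff.mp hpair with ⟨rfl, rfl⟩ | ⟨rfl, rfl⟩ <;>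
      rcases hperm with ⟨rfl, rfl⟩ | ⟨rfl, rfl⟩
    · exact Or.inl ⟨rfl, rfl⟩
    · exact Or.inr ⟨rfl, rfl⟩
    · exact Or.inr ⟨rfl, rfl⟩
    · exact Or.inl ⟨rfl, rfl⟩
  have hne12 : ε₁ ≠ ε₂ := fun h => h1T (h ▸ hmem)
  have hskey : s(ε₁, ε₂) = s(c, d) := by
    rw [← hpair]
    rcases hperm with ⟨rfl, rfl⟩ | ⟨rfl, rfl⟩
    · rfl
    · exact Sym2.eq_swap
  refine ⟨ε₁, ε₂, w, T, hperm', hcard, hmem, h1T, hwT, hwe, ?_, ?_⟩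
  · intro x hx
    rcases (sup_adj _ _ _ _).mp (Γ.adj_sub (hadjs x hx).2) with h | h
    · exact h
    · exfalso
      rw [fromEdgeSet_adj, Set.mem_singleton_iff, ← hskey] at h
      rcases Sym2.eq_iff.mp h.1 with ⟨h3, h4⟩ | ⟨h3, h4⟩
      · exact hwe h3
      · exact h1T (h4 ▸ hx)
  · intro x hx hxne
    rcases (sup_adj _ _ _ _).mp (Γ.adj_sub (hadjs x hx).1) with h | h
    · exact h
    · exfalso
      rw [fromEdgeSet_adj, Set.mem_singleton_iff, ← hskey] at h
      rcases Sym2.eq_iff.mp h.1 with ⟨h3, h4⟩ | ⟨h3, h4⟩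
      · exact hxne h4
      · exact hne12 h3

/-- Lemma A: adding the edge `{p,r}` creates a new `K_{2,s}` when `p,q` have `s-1`
common neighbours and `q ~ r`. -/
lemma edge_gets_added (hs1 : 1 ≤ s) (Gt : SimpleGraph V) (p q r : V)
    (hcom : s - 1 ≤ ((Gt.neighborSet p ∩ Gt.neighborSet q)).ncard)
    (hpq : p ≠ q) (hadj : Gt.Adj q r) (hrp : r ≠ p) (hnpr : ¬ Gt.Adj p r) :
    numCopies (completeBipartiteGraph (Fin 2) (Fin s)) Gt <
      numCopies (completeBipartiteGraph (Fin 2) (Fin s)) (Gt ⊔ fromEdgeSet {s(p, r)}) := by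
  classical
  set com := Gt.neighborSet p ∩ Gt.neighborSet q with hcomdef
  have hfin : com.Finite := Set.toFinite _
  obtain ⟨T', hT'sub, hT'card⟩ := Finset.exists_subset_card_eq
    (show s - 1 ≤ hfin.toFinset.card by
      rw [← Set.ncard_eq_toFinset_card _ hfin]; exact hcom)
  have hT'mem : ∀ x ∈ T', x ∈ com := fun x hx => (Set.Finite.mem_toFinset hfin).mp (hT'sub hx)
  have hrT' : r ∉ T' := by
    intro hr
    exact hnpr ((hT'mem r hr).1)
  set T₀ : Finset V := insert r T' with hT₀
  have hcard : T₀.card = s := by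
    rw [hT₀, Finset.card_insert_of_notMem hrT', hT'card]
    omega
  have hpT₀ : p ∉ T₀ := by
    rw [hT₀, Finset.mem_insert]
    rintro (rfl | hp)
    · exact hrp rfl
    · exact Gt.irrefl (hT'mem p hp).1
  have hqT₀ : q ∉ T₀ := by
    rw [hT₀, Finset.mem_insert]
    rintro (rfl | hq)
    · exact Gt.irrefl hadj
    · exact Gt.irrefl (hT'mem q hq).2
  set G₂ := Gt ⊔ fromEdgeSet {s(p, r)} with hG₂
  have hadj₀ : ∀ x ∈ T₀, G₂.Adj p x ∧ G₂.Adj q x := by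
    intro x hx
    rw [hT₀, Finset.mem_insert] at hx
    rcases hx with rfl | hx
    · constructor
      · exact Or.inr (by rw [fromEdgeSet_adj]; exact ⟨rfl, fun h => hrp h.symm⟩)
      · exact Or.inl hadj
    · exact ⟨Or.inl ((hT'mem x hx).1), Or.inl ((hT'mem x hx).2)⟩
  obtain ⟨Γ, hiso, hΓadj⟩ := copy_exists G₂ p q T₀ hcard hpq hpT₀ hqT₀ hadj₀
  exact numCopies_lt _ le_sup_left Γ hiso
    (hΓadj r (by rw [hT₀]; exact Finset.mem_insert_self r T')) hnpr

end Aux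

/-- In the `K_{2,s}`-bootstrap process (`s ≥ 3`) on an `n`-vertex graph
with `n ≥ s + 2`: if `i + 4 ≤ τ` and `P` is a partition of the vertex set in which any
two distinct vertices of a common block have at least `s − 1` common neighbours at time
`i`, then two distinct blocks `A, B ∈ P` can be merged so that in the coarser partition
`(P \ {A, B}) ∪ {A ∪ B}` any two distinct vertices of a common block have at least
`s − 1` common neighbours at time `i + 4`. -/
theorem partition_coarsen {V : Type} [Fintype V] (s : ℕ) (hs : 3 ≤ s)
    (G : SimpleGraph V) (hn : s + 2 ≤ Fintype.card V) (i : ℕ)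
    (hi : i + 4 ≤ runningTime (completeBipartiteGraph (Fin 2) (Fin s)) G)
    (P : Set (Set V)) (hP : Setoid.IsPartition P)
    (hblocks : ∀ C ∈ P, ∀ x ∈ C, ∀ y ∈ C, x ≠ y → s - 1 ≤
      ((bootProcess (completeBipartiteGraph (Fin 2) (Fin s)) G i).neighborSet x ∩
        (bootProcess (completeBipartiteGraph (Fin 2) (Fin s)) G i).neighborSet y).ncard) :
    ∃ A ∈ P, ∃ B ∈ P, A ≠ B ∧
      ∀ C ∈ (P \ {A, B}) ∪ {A ∪ B}, ∀ x ∈ C, ∀ y ∈ C, x ≠ y → s - 1 ≤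
        ((bootProcess (completeBipartiteGraph (Fin 2) (Fin s)) G (i + 4)).neighborSet x ∩
          (bootProcess (completeBipartiteGraph (Fin 2) (Fin s)) G (i + 4)).neighborSet y).ncard := by
  classical
  set B : ℕ → SimpleGraph V := fun t => bootProcess (completeBipartiteGraph (Fin 2) (Fin s)) G t
    with hBdef
  have hsucc : ∀ t, B (t + 1) = bootStep (completeBipartiteGraph (Fin 2) (Fin s)) (B t) :=
    fun t => rfl
  have hmono : ∀ {t u : ℕ}, t ≤ u → B t ≤ B u := by
    intro t u h
    induction h with
    | refl => exact le_refl _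
    | step h ih =>
        refine le_trans ih ?_
        rw [hsucc]
        exact le_sup_left
  set SB : V → V → Prop := fun p q => ∃ C ∈ P, p ∈ C ∧ q ∈ C with hSBdef
  have hSBrefl : ∀ p, SB p p := by
    intro p
    obtain ⟨C, ⟨hCP, hpC⟩, -⟩ := hP.2 p
    exact ⟨C, hCP, hpC, hpC⟩
  have hSBtrans : ∀ {p q r}, SB p q → SB q r → SB p r := by
    rintro p q r ⟨C, h1, h2, h3⟩ ⟨C', h1', h2', h3'⟩
    have hCC : C = C' := (hP.2 q).unique ⟨h1, h3⟩ ⟨h1', h2'⟩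
    exact ⟨C, h1, h2, hCC ▸ h3'⟩
  set com : ℕ → V → V → Set V := fun t x y => (B t).neighborSet x ∩ (B t).neighborSet y
    with hcomdef
  have hcom_mono : ∀ {t u : ℕ}, t ≤ u → ∀ x y, (com t x y).ncard ≤ (com u x y).ncard := by
    intro t u h x y
    apply Set.ncard_le_ncard _ (Set.toFinite _)
    rintro z ⟨hz1, hz2⟩
    exact ⟨hmono h hz1, hmono h hz2⟩
  have hNice : ∀ t, i ≤ t → ∀ p q, SB p q → p ≠ q → s - 1 ≤ (com t p q).ncard := by
    rintro t ht p q ⟨C, hCP, hpC, hqC⟩ hpq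
    exact le_trans (hblocks C hCP p hpC q hqC hpq) (hcom_mono ht p q)
  -- Lemma A as a step on the process
  have hF2 : ∀ t, i ≤ t → ∀ p q r, SB p q → (B t).Adj q r → r ≠ p →
      (B (t + 1)).Adj p r := by
    intro t ht p q r hsb hadj hrp
    by_cases hpq : p = q
    · subst hpq; exact hmono (Nat.le_succ t) hadj
    by_cases hpr : (B t).Adj p r
    · exact hmono (Nat.le_succ t) hpr
    have hlt := edge_gets_added (by omega) (B t) p q r (hNice t ht p q hsb hpq) hpq hadj hrp hpr
    rw [hsucc, bootStep]
    exact (sup_adj _ _ _ _).mpr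
      (Or.inr ((fromRel_adj _ _ _).mpr ⟨fun h => hrp h.symm, Or.inl hlt⟩))
  -- trace of a new edge
  have htrace : ∀ t (c d : V), (B (t + 1)).Adj c d → ¬ (B t).Adj c d →
      ∃ ε₁ ε₂ w : V, ∃ T : Finset V, ((ε₁ = c ∧ ε₂ = d) ∨ (ε₁ = d ∧ ε₂ = c)) ∧
        T.card = s ∧ ε₂ ∈ T ∧ ε₁ ∉ T ∧ w ∉ T ∧ w ≠ ε₁ ∧
        (∀ x ∈ T, (B t).Adj w x) ∧ (∀ x ∈ T, x ≠ ε₂ → (B t).Adj ε₁ x) := by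
    intro t c d h1 h0
    have hcd : c ≠ d := h1.ne
    rw [hsucc, bootStep] at h1
    rcases (sup_adj _ _ _ _).mp h1 with h | h
    · exact absurd h h0
    rw [fromRel_adj] at h
    rcases h.2 with hcond | hcond
    · exact trace_core (B t) c d hcd h0 hcond
    · obtain ⟨ε₁, ε₂, w, T, hperm, h2, h3, h4, h5, h6, h7, h8⟩ :=
        trace_core (B t) d c hcd.symm (fun hh => h0 hh.symm) hcond
      exact ⟨ε₁, ε₂, w, T, hperm.symm, h2, h3, h4, h5, h6, h7, h8⟩
  by_cases hMpos : ∃ t, i ≤ t ∧ t ≤ i + 3 ∧ ∃ p q : V, ¬ SB p q ∧ s ≤ (com t p q).ncard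
  · -- POSITIVE BRANCH: merge the two blocks
    obtain ⟨t, hti, ht3, p, q, hnSB, hcomge⟩ := hMpos
    have hpq : p ≠ q := fun h => hnSB (h ▸ hSBrefl p)
    obtain ⟨A, ⟨hAP, hpA⟩, -⟩ := hP.2 p
    obtain ⟨Bb, ⟨hBP, hqB⟩, -⟩ := hP.2 q
    have hAB : A ≠ Bb := fun h => hnSB ⟨A, hAP, hpA, h ▸ hqB⟩
    -- extract an s-element common neighbourhood
    have hfin : (com t p q).Finite := Set.toFinite _
    obtain ⟨T, hTsub, hTcard⟩ := Finset.exists_subset_card_eq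
      (show s ≤ hfin.toFinset.card by
        rw [← Set.ncard_eq_toFinset_card _ hfin]; exact hcomge)
    have hTmem : ∀ b ∈ T, (B t).Adj p b ∧ (B t).Adj q b := by
      intro b hb
      have := (Set.Finite.mem_toFinset hfin).mp (hTsub hb)
      exact ⟨this.1, this.2⟩
    have hpT : p ∉ T := fun h => (B t).irrefl (hTmem p h).1
    have hqT : q ∉ T := fun h => (B t).irrefl (hTmem q h).2
    have key : ∀ x y, x ∈ A → y ∈ Bb → x ≠ y → s - 1 ≤ (com (i + 4) x y).ncard := by
      intro x y hxA hyB hxy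
      have hxadj : ∀ b ∈ T, b ≠ x → (B (t + 1)).Adj x b := by
        intro b hb hbx
        by_cases hxp : x = p
        · subst hxp; exact hmono (Nat.le_succ t) (hTmem b hb).1
        · exact hF2 t hti x p b ⟨A, hAP, hxA, hpA⟩ (hTmem b hb).1 hbx
      have hyadj : ∀ b ∈ T, b ≠ y → (B (t + 1)).Adj y b := by
        intro b hb hby
        by_cases hyq : y = q
        · subst hyq; exact hmono (Nat.le_succ t) (hTmem b hb).2
        · exact hF2 t hti y q b ⟨Bb, hBP, hyB, hqB⟩ (hTmem b hb).2 hby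
      have ht14 : t + 1 ≤ i + 4 := by omega
      have ht04 : t ≤ i + 4 := by omega
      have hsub2 : ∀ b, b ∈ T → b ≠ x → b ≠ y → b ∈ com (i + 4) x y := by
        intro b hb hbx hby
        exact ⟨hmono ht14 (hxadj b hb hbx), hmono ht14 (hyadj b hb hby)⟩
      have hfinal : ∀ T₂ : Finset V, (↑T₂ : Set V) ⊆ com (i + 4) x y → s - 1 ≤ T₂.card →
          s - 1 ≤ (com (i + 4) x y).ncard := by
        intro T₂ hsub hcard
        calc s - 1 ≤ T₂.card := hcard
          _ = (↑T₂ : Set V).ncard := (Set.ncard_coe_finset T₂).symm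
          _ ≤ (com (i + 4) x y).ncard := Set.ncard_le_ncard hsub (Set.toFinite _)
      by_cases hxT : x ∈ T <;> by_cases hyT : y ∈ T
      · -- both endpoints in T : use T minus {x,y} plus {p,q}
        have hpcom : p ∈ com (i + 4) x y :=
          ⟨hmono ht04 (hTmem x hxT).1.symm, hmono ht04 (hTmem y hyT).1.symm⟩
        have hqcom : q ∈ com (i + 4) x y :=
          ⟨hmono ht04 (hTmem x hxT).2.symm, hmono ht04 (hTmem y hyT).2.symm⟩
        have hyex : y ∈ T.erase x := Finset.mem_erase.mpr ⟨hxy.symm, hyT⟩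
        have hqnot : q ∉ insert p ((T.erase x).erase y) := by
          intro h
          rcases Finset.mem_insert.mp h with h | h
          · exact hpq h.symm
          · exact hqT (Finset.mem_of_mem_erase (Finset.mem_of_mem_erase h))
        have hpnot : p ∉ (T.erase x).erase y :=
          fun h => hpT (Finset.mem_of_mem_erase (Finset.mem_of_mem_erase h))
        refine hfinal (insert q (insert p ((T.erase x).erase y))) ?_ ?_
        · intro b hb
          rcases Finset.mem_insert.mp (by exact_mod_cast hb) with rfl | hb
          · exact hqcom
          rcases Finset.mem_insert.mp hb with rfl | hb
          · exact hpcom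
          · exact hsub2 b (Finset.mem_of_mem_erase (Finset.mem_of_mem_erase hb))
              (Finset.ne_of_mem_erase (Finset.mem_of_mem_erase hb))
              (Finset.ne_of_mem_erase hb)
        · rw [Finset.card_insert_of_notMem hqnot, Finset.card_insert_of_notMem hpnot,
            Finset.card_erase_of_mem hyex, Finset.card_erase_of_mem hxT, hTcard]
          omega
      · refine hfinal (T.erase x) ?_ ?_
        · intro b hb
          have hb' : b ∈ T.erase x := by exact_mod_cast hb
          exact hsub2 b (Finset.mem_of_mem_erase hb') (Finset.ne_of_mem_erase hb')
            (fun h => hyT (h ▸ Finset.mem_of_mem_erase hb'))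
        · rw [Finset.card_erase_of_mem hxT, hTcard]
      · refine hfinal (T.erase y) ?_ ?_
        · intro b hb
          have hb' : b ∈ T.erase y := by exact_mod_cast hb
          exact hsub2 b (Finset.mem_of_mem_erase hb')
            (fun h => hxT (h ▸ Finset.mem_of_mem_erase hb')) (Finset.ne_of_mem_erase hb')
        · rw [Finset.card_erase_of_mem hyT, hTcard]
      · refine hfinal T ?_ ?_
        · intro b hb
          have hb' : b ∈ T := by exact_mod_cast hb
          exact hsub2 b hb' (fun h => hxT (h ▸ hb')) (fun h => hyT (h ▸ hb'))
        · rw [hTcard]; omega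
    refine ⟨A, hAP, Bb, hBP, hAB, ?_⟩
    intro C hC x hx y hy hxy
    rcases hC with hC | hC
    · exact le_trans (hblocks C hC.1 x hx y hy hxy) (hcom_mono (by omega) x y)
    · rcases Set.mem_singleton_iff.mp hC with rfl
      rcases hx with hxA | hxB <;> rcases hy with hyA | hyB
      · exact le_trans (hblocks A hAP x hxA y hyA hxy) (hcom_mono (by omega) x y)
      · exact key x y hxA hyB hxy
      · have hthis := key y x hyA hxB hxy.symm
        have heq : com (i + 4) y x = com (i + 4) x y := Set.inter_comm _ _
        rw [heq] at hthis
        exact hthis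
      · exact le_trans (hblocks Bb hBP x hxB y hyB hxy) (hcom_mono (by omega) x y)
  · -- NEGATIVE BRANCH: the process would have to stall at time i+2, contradiction
    exfalso
    push_neg at hMpos
    have hM : ∀ t, i ≤ t → t ≤ i + 3 → ∀ p q : V, s ≤ (com t p q).ncard → SB p q := by
      intro t h1 h2 p q hle
      by_contra hnsb
      exact absurd hle (by simpa using hMpos t h1 h2 p q hnsb)
    -- the trace of a new edge gives a same-block pivot
    have htraceSB : ∀ t, i ≤ t → t + 1 ≤ i + 3 → ∀ c d : V,
        (B (t + 1)).Adj c d → ¬ (B t).Adj c d →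
        ∃ ε₁ ε₂ w : V, ((ε₁ = c ∧ ε₂ = d) ∨ (ε₁ = d ∧ ε₂ = c)) ∧ SB ε₁ w ∧
          (B t).Adj w ε₂ := by
      intro t ht ht3 c d h1 h0
      obtain ⟨ε₁, ε₂, w, T, hperm, hcard, hmem, h1T, hwT, hwe, hadjw, hadj1⟩ :=
        htrace t c d h1 h0
      have hadj12 : (B (t + 1)).Adj ε₁ ε₂ := by
        rcases hperm with ⟨rfl, rfl⟩ | ⟨rfl, rfl⟩
        · exact h1
        · exact h1.symm
      have hsub : (↑T : Set V) ⊆ com (t + 1) ε₁ w := by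
        intro x hx
        have hx' : x ∈ T := by exact_mod_cast hx
        constructor
        · by_cases hxe : x = ε₂
          · subst hxe; exact hadj12
          · exact hmono (Nat.le_succ t) (hadj1 x hx' hxe)
        · exact hmono (Nat.le_succ t) (hadjw x hx')
      have hsle : s ≤ (com (t + 1) ε₁ w).ncard := by
        calc s = T.card := hcard.symm
          _ = (↑T : Set V).ncard := (Set.ncard_coe_finset T).symm
          _ ≤ _ := Set.ncard_le_ncard hsub (Set.toFinite _)
      exact ⟨ε₁, ε₂, w, hperm, hM (t + 1) (by omega) ht3 ε₁ w hsle, hadjw ε₂ hmem⟩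
    -- claim : B (i+2) = B (i+3)
    have hstall : B (i + 2) = B (i + 3) := by
      apply le_antisymm (hmono (by omega))
      intro c d h3
      by_contra h2
      -- edge {c,d} is new at step i+3
      obtain ⟨ε₁, ε₂, w, hperm, hSB1, hwadj⟩ :=
        htraceSB (i + 2) (by omega) (by omega) c d h3 h2
      have hne12 : ε₁ ≠ ε₂ := by
        rcases hperm with ⟨rfl, rfl⟩ | ⟨rfl, rfl⟩
        · exact h3.ne
        · exact h3.ne'
      have hgoal : ¬ (B (i + 2)).Adj ε₁ ε₂ := by
        rcases hperm with ⟨rfl, rfl⟩ | ⟨rfl, rfl⟩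
        · exact h2
        · exact fun h => h2 h.symm
      -- the pivot edge {w, ε₂} must be new at step i+2
      have hwnew : ¬ (B (i + 1)).Adj w ε₂ :=
        fun h => hgoal (hF2 (i + 1) (by omega) ε₁ w ε₂ hSB1 h hne12.symm)
      obtain ⟨δ₁, δ₂, v, hpermδ, hSB2, hvadj⟩ :=
        htraceSB (i + 1) (by omega) (by omega) w ε₂ hwadj hwnew
      have hδne : δ₁ ≠ δ₂ := by
        rcases hpermδ with ⟨rfl, rfl⟩ | ⟨rfl, rfl⟩
        · exact hwadj.ne
        · exact hwadj.ne'
      have hvnew : ¬ (B i).Adj v δ₂ := by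
        intro h
        have := hF2 i (le_refl i) δ₁ v δ₂ hSB2 h hδne.symm
        rcases hpermδ with ⟨rfl, rfl⟩ | ⟨rfl, rfl⟩
        · exact hwnew this
        · exact hwnew this.symm
      obtain ⟨γ₁, γ₂, v₁, hpermγ, hSB3, hv₁adj⟩ :=
        htraceSB i (le_refl i) (by omega) v δ₂ hvadj hvnew
      -- final contradiction engine
      have hstep2 : ∀ a b : V, SB ε₁ a → SB ε₂ b → (B i).Adj a b → False := by
        intro a b hsa hsb hadj
        by_cases hbe : b = ε₁
        · rw [hbe] at hadj hsb
          by_cases hae : a = ε₂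
          · rw [hae] at hadj
            exact hgoal (hmono (by omega : i ≤ i + 2) hadj.symm)
          · have h1 : (B (i + 1)).Adj ε₂ a :=
              hF2 i (le_refl i) ε₂ ε₁ a hsb hadj.symm hae
            have h2 : (B (i + 2)).Adj ε₁ ε₂ :=
              hF2 (i + 1) (by omega) ε₁ a ε₂ hsa h1.symm hne12.symm
            exact hgoal h2
        · have h1 : (B (i + 1)).Adj ε₁ b := hF2 i (le_refl i) ε₁ a b hsa hadj hbe
          have h2 : (B (i + 2)).Adj ε₂ ε₁ :=
            hF2 (i + 1) (by omega) ε₂ b ε₁ hsb h1.symm hne12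
          exact hgoal h2.symm
      rcases hpermδ with ⟨hδ1, hδ2⟩ | ⟨hδ1, hδ2⟩
      · -- δ₁ = w, δ₂ = ε₂
        rw [hδ1] at hSB2
        rcases hpermγ with ⟨hγ1, hγ2⟩ | ⟨hγ1, hγ2⟩
        · -- γ₁ = v, γ₂ = δ₂ = ε₂
          rw [hγ1] at hSB3
          rw [hγ2, hδ2] at hv₁adj
          exact hstep2 v₁ ε₂ (hSBtrans (hSBtrans hSB1 hSB2) hSB3) (hSBrefl ε₂) hv₁adj
        · -- γ₁ = δ₂ = ε₂, γ₂ = v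
          rw [hγ1, hδ2] at hSB3
          rw [hγ2] at hv₁adj
          exact hstep2 v v₁ (hSBtrans hSB1 hSB2) hSB3 hv₁adj.symm
      · -- δ₁ = ε₂, δ₂ = w
        rw [hδ1] at hSB2
        rcases hpermγ with ⟨hγ1, hγ2⟩ | ⟨hγ1, hγ2⟩
        · -- γ₁ = v, γ₂ = δ₂ = w
          rw [hγ1] at hSB3
          rw [hγ2, hδ2] at hv₁adj
          exact hstep2 w v₁ hSB1 (hSBtrans hSB2 hSB3) hv₁adj.symm
        · -- γ₁ = δ₂ = w, γ₂ = v
          rw [hγ1, hδ2] at hSB3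
          rw [hγ2] at hv₁adj
          exact hstep2 v₁ v (hSBtrans hSB1 hSB3) hSB2 hv₁adj
    have hle : runningTime (completeBipartiteGraph (Fin 2) (Fin s)) G ≤ i + 2 :=
      Nat.sInf_le hstall
    omega
end

section
/- Let H̃ be the 6-vertex graph with vertex set {0,1,2,3,4,5}, whose edges are the cycle edges {x,y} with x − y ≡ 1 (mod 6) together with the chord {0,3}. Then there exist a constant c > 0 and n₀ ∈ ℕ such that for every n ≥ n₀ there is an n-vertex graph G̃ with the following properties: the H̃-bootstrap process (G̃_i)_{i≥0} on G̃ has running time τ_{H̃}(G̃) ≥ c·n, and G̃_i is bipartite for every i ≥ 0. -/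
open SimpleGraph

/-- The 6-cycle `0 1 2 3 4 5` with the chord `{0, 3}` added. -/
def sixCycleWithChord : SimpleGraph (Fin 6) :=
  SimpleGraph.fromRel (fun u v => (u.val + 1) % 6 = v.val ∨ (u.val = 0 ∧ v.val = 3))

open SimpleGraph

variable {α β : Type*}

instance subgraphFinite [Finite β] (G : SimpleGraph β) : Finite G.Subgraph := by
  have : Function.Injective (fun G' : G.Subgraph => (G'.verts, G'.Adj)) := by
    intro a b h
    simp only [Prod.mk.injEq] at h
    exact SimpleGraph.Subgraph.ext h.1 h.2
  exact Finite.of_injective _ this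

/-- The set of copies of `H` in `G`. -/
def copySet (H : SimpleGraph α) (G : SimpleGraph β) : Set G.Subgraph :=
  {G' : G.Subgraph | Nonempty (G'.coe ≃g H)}

lemma numCopies_eq (H : SimpleGraph α) (G : SimpleGraph β) :
    numCopies H G = (copySet H G).ncard := rfl

def liftSub {G G₂ : SimpleGraph β} (h : G ≤ G₂) (G' : G.Subgraph) : G₂.Subgraph :=
  ⟨G'.verts, G'.Adj, fun ha => h (G'.adj_sub ha), G'.edge_vert, G'.symm⟩

lemma liftSub_coe {G G₂ : SimpleGraph β} (h : G ≤ G₂) (G' : G.Subgraph) :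
    (liftSub h G').coe = G'.coe := rfl

lemma liftSub_inj {G G₂ : SimpleGraph β} (h : G ≤ G₂) :
    Function.Injective (liftSub h) := by
  intro a b hab
  have h1 : (liftSub h a).verts = (liftSub h b).verts := by rw [hab]
  have h2 : (liftSub h a).Adj = (liftSub h b).Adj := by rw [hab]
  exact SimpleGraph.Subgraph.ext h1 h2

lemma liftSub_maps {H : SimpleGraph α} {G G₂ : SimpleGraph β} (h : G ≤ G₂) :
    Set.MapsTo (liftSub h) (copySet H G) (copySet H G₂) := by
  intro G' hG'
  obtain ⟨φ⟩ := hG'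
  exact ⟨by rw [liftSub_coe]; exact φ⟩

lemma numCopies_lt_of_new [Finite β] {H : SimpleGraph α} {G G₂ : SimpleGraph β} (h : G ≤ G₂)
    (G'' : G₂.Subgraph) (hiso : Nonempty (G''.coe ≃g H)) (a b : β)
    (hab : G''.Adj a b) (hnab : ¬ G.Adj a b) :
    numCopies H G < numCopies H G₂ := by
  rw [numCopies_eq, numCopies_eq]
  rw [← Set.ncard_image_of_injOn ((liftSub_inj h).injOn)]
  apply Set.ncard_lt_ncard _ (Set.toFinite _)
  constructor
  · exact Set.image_subset_iff.2 (fun G' hG' => liftSub_maps h hG')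
  · intro hsub
    have hmem : G'' ∈ liftSub h '' copySet H G := hsub hiso
    obtain ⟨G', _, rfl⟩ := hmem
    exact hnab (G'.adj_sub hab)

lemma exists_new_of_numCopies_lt [Finite β] {H : SimpleGraph α} {G G₂ : SimpleGraph β}
    (h : G ≤ G₂) (hlt : numCopies H G < numCopies H G₂) :
    ∃ G'' : G₂.Subgraph, Nonempty (G''.coe ≃g H) ∧ ∃ a b, G''.Adj a b ∧ ¬ G.Adj a b := by
  by_contra hcon
  push_neg at hcon
  have hsub : copySet H G₂ ⊆ liftSub h '' copySet H G := by
    intro G'' hG''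
    refine ⟨⟨G''.verts, G''.Adj, fun ha => hcon G'' hG'' _ _ ha, G''.edge_vert, G''.symm⟩, ?_, ?_⟩
    · exact hG''
    · rfl
  have := Set.ncard_le_ncard hsub (Set.toFinite _)
  rw [Set.ncard_image_of_injOn ((liftSub_inj h).injOn)] at this
  rw [numCopies_eq, numCopies_eq] at hlt
  omega

lemma copy_to_map {H : SimpleGraph α} {G : SimpleGraph β} (G' : G.Subgraph)
    (φ : G'.coe ≃g H) :
    ∃ f : α → β, Function.Injective f ∧
      (∀ p q, H.Adj p q → G'.Adj (f p) (f q)) ∧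
      (∀ a b, G'.Adj a b → ∃ p q, H.Adj p q ∧ a = f p ∧ b = f q) := by
  refine ⟨fun p => (φ.symm p : β), ?_, ?_, ?_⟩
  · intro p q hpq
    exact φ.symm.injective (Subtype.val_injective hpq)
  · intro p q hpq
    have := φ.symm.map_rel_iff.mpr hpq
    rwa [SimpleGraph.Subgraph.coe_adj] at this
  · intro a b hab
    have ha : a ∈ G'.verts := G'.edge_vert hab
    have hb : b ∈ G'.verts := G'.edge_vert hab.symm
    refine ⟨φ ⟨a, ha⟩, φ ⟨b, hb⟩, ?_, ?_, ?_⟩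
    · apply φ.map_rel_iff.mpr
      rw [SimpleGraph.Subgraph.coe_adj]
      exact hab
    · simp
    · simp

lemma map_to_copy {H : SimpleGraph α} {G : SimpleGraph β} (f : α → β)
    (hf : Function.Injective f) (hadj : ∀ p q, H.Adj p q → G.Adj (f p) (f q)) :
    ∃ G' : G.Subgraph, Nonempty (G'.coe ≃g H) ∧
      ∀ a b, G'.Adj a b ↔ ∃ p q, H.Adj p q ∧ a = f p ∧ b = f q := by
  refine ⟨⟨Set.range f, fun a b => ∃ p q, H.Adj p q ∧ a = f p ∧ b = f q, ?_, ?_, ?_⟩, ?_, ?_⟩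
  · rintro a b ⟨p, q, hpq, rfl, rfl⟩
    exact hadj p q hpq
  · rintro a b ⟨p, q, hpq, rfl, rfl⟩
    exact ⟨p, rfl⟩
  · refine ⟨?_⟩
    rintro a b ⟨p, q, hpq, rfl, rfl⟩
    exact ⟨q, p, hpq.symm, rfl, rfl⟩
  · refine ⟨⟨(Equiv.ofInjective f hf).symm, ?_⟩⟩
    intro x y
    simp only [SimpleGraph.Subgraph.coe_adj]
    constructor
    · intro h
      refine ⟨(Equiv.ofInjective f hf).symm x, (Equiv.ofInjective f hf).symm y, h, ?_, ?_⟩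
      · exact (Equiv.apply_ofInjective_symm hf x).symm
      · exact (Equiv.apply_ofInjective_symm hf y).symm
    · rintro ⟨p, q, hpq, hx, hy⟩
      have hx' : (Equiv.ofInjective f hf).symm x = p := by
        apply hf
        rw [Equiv.apply_ofInjective_symm hf x, hx]
      have hy' : (Equiv.ofInjective f hf).symm y = q := by
        apply hf
        rw [Equiv.apply_ofInjective_symm hf y, hy]
      rw [hx', hy']
      exact hpq
  · intro a b
    rfl

namespace BootAux

instance : DecidableRel sixCycleWithChord.Adj :=
  fun x y => decidable_of_iff' _ (SimpleGraph.fromRel_adj _ x y)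

/-- step relation avoiding the (unordered) edge `{p,q}` -/
def st (p q x y : Fin 6) : Prop :=
  sixCycleWithChord.Adj x y ∧ ¬(x = p ∧ y = q) ∧ ¬(x = q ∧ y = p)

instance (p q x y : Fin 6) : Decidable (st p q x y) := by unfold st; infer_instance

def stB (p q x y : Fin 6) : Bool := decide (st p q x y)

lemma stB_iff (p q x y : Fin 6) : st p q x y ↔ stB p q x y = true := by
  simp [stB]

/-- ball of radius k around z in H minus edge {p,q} -/
def ballL (p q z : Fin 6) : ℕ → List (Fin 6)
  | 0 => [z]
  | (k+1) => (List.finRange 6).filter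
      (fun w => ((ballL p q z k).any (fun x => x == w || stB p q x w)))

lemma ballL_succ {p q z : Fin 6} {k : ℕ} {w : Fin 6} (h : w ∈ ballL p q z (k+1)) :
    ∃ x ∈ ballL p q z k, x = w ∨ st p q x w := by
  simp only [ballL, List.mem_filter, List.any_eq_true, Bool.or_eq_true, beq_iff_eq] at h
  obtain ⟨-, x, hx, hxw⟩ := h
  exact ⟨x, hx, by simpa [stB_iff] using hxw⟩

lemma ballL_zero {p q z w : Fin 6} (h : w ∈ ballL p q z 0) : w = z := by
  simpa [ballL] using h

lemma reach_all (p q : Fin 6) (hpq : sixCycleWithChord.Adj p q) (z w : Fin 6) :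
    w ∈ ballL p q z 4 := by
  revert p q z w
  decide

/-- every edge of H lies on a 4-cycle -/
lemma four_cycle (p q : Fin 6) (hpq : sixCycleWithChord.Adj p q) :
    ∃ r s : Fin 6, sixCycleWithChord.Adj q r ∧ sixCycleWithChord.Adj r s ∧
      sixCycleWithChord.Adj s p ∧ r ≠ p ∧ r ≠ q ∧ s ≠ p ∧ s ≠ q := by
  revert p q
  decide

/-- H minus any edge contains a cycle avoiding that edge: either a 4-cycle or the 6-cycle -/
lemma cycle_avoiding (p q : Fin 6) (hpq : sixCycleWithChord.Adj p q) :
    (∃ a b c d : Fin 6, a ≠ b ∧ a ≠ c ∧ a ≠ d ∧ b ≠ c ∧ b ≠ d ∧ c ≠ d ∧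
      st p q a b ∧ st p q b c ∧ st p q c d ∧ st p q d a) ∨
    (st p q 0 1 ∧ st p q 1 2 ∧ st p q 2 3 ∧ st p q 3 4 ∧ st p q 4 5 ∧ st p q 5 0) := by
  revert p q
  decide

end BootAux

namespace BootAux

def baseRel (n : ℕ) (a b : Fin n) : Prop :=
  (Even a.val ∧ b.val = a.val + 1) ∨ (Even a.val ∧ b.val = a.val + 2) ∨
    (a.val = 1 ∧ b.val = 3)

def baseGraph (n : ℕ) : SimpleGraph (Fin n) := SimpleGraph.fromRel (baseRel n)

lemma base_adj {n : ℕ} {a b : Fin n} :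
    (baseGraph n).Adj a b ↔ a ≠ b ∧ (baseRel n a b ∨ baseRel n b a) :=
  SimpleGraph.fromRel_adj _ a b

/-- values of adjacent vertices differ by at most 2 -/
lemma base_close {n : ℕ} {a b : Fin n} (h : (baseGraph n).Adj a b) :
    a.val ≤ b.val + 2 ∧ b.val ≤ a.val + 2 := by
  rw [base_adj] at h
  rcases h with ⟨-, h | h⟩ <;> rcases h with h | h | h <;> omega

/-- the smaller endpoint of a high edge is determined by the larger -/
lemma base_smaller {n : ℕ} {a b : Fin n} (h : (baseGraph n).Adj a b)
    (hlt : a.val < b.val) (hb : 4 ≤ b.val) :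
    (b.val % 2 = 0 ∧ a.val + 2 = b.val) ∨ (b.val % 2 = 1 ∧ a.val + 1 = b.val) := by
  rw [base_adj] at h
  rcases h with ⟨-, h | h⟩ <;> rcases h with ⟨h1, h2⟩ | ⟨h1, h2⟩ | ⟨h1, h2⟩ <;>
    (try rw [Nat.even_iff] at h1) <;> omega

lemma base_two_smaller {n : ℕ} {x y z : Fin n} (h1 : (baseGraph n).Adj x y)
    (h2 : (baseGraph n).Adj x z) (hyz : y ≠ z) (hy : y.val < x.val)
    (hz : z.val < x.val) (hx : 4 ≤ x.val) : False := by
  have e1 := base_smaller h1.symm hy hx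
  have e2 := base_smaller h2.symm hz hx
  have : y.val = z.val := by omega
  exact hyz (Fin.val_injective this)

lemma base_ne_val {n : ℕ} {a b : Fin n} (h : (baseGraph n).Adj a b) : a.val ≠ b.val :=
  fun hv => h.ne (Fin.val_injective hv)

/-- no 4-cycle among high vertices -/
lemma no_high_cycle4 {n : ℕ} {a b c d : Fin n}
    (hab : (baseGraph n).Adj a b) (hbc : (baseGraph n).Adj b c)
    (hcd : (baseGraph n).Adj c d) (hda : (baseGraph n).Adj d a)
    (hac : a ≠ c) (hbd : b ≠ d)
    (ha : 4 ≤ a.val) (hb : 4 ≤ b.val) (hc : 4 ≤ c.val) (hd : 4 ≤ d.val) : False := by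
  have nab := base_ne_val hab
  have nbc := base_ne_val hbc
  have ncd := base_ne_val hcd
  have nda := base_ne_val hda
  have nac : a.val ≠ c.val := fun hv => hac (Fin.val_injective hv)
  have nbd : b.val ≠ d.val := fun hv => hbd (Fin.val_injective hv)
  have hcases : (b.val < a.val ∧ d.val < a.val) ∨ (a.val < b.val ∧ c.val < b.val) ∨
      (b.val < c.val ∧ d.val < c.val) ∨ (c.val < d.val ∧ a.val < d.val) := by omega
  rcases hcases with ⟨h1, h2⟩ | ⟨h1, h2⟩ | ⟨h1, h2⟩ | ⟨h1, h2⟩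
  · exact base_two_smaller hab hda.symm hbd h1 h2 ha
  · exact base_two_smaller hab.symm hbc hac h1 h2 hb
  · exact base_two_smaller hbc.symm hcd hbd h1 h2 hc
  · exact base_two_smaller hcd.symm hda hac.symm h1 h2 hd

/-- no 6-cycle among high vertices -/
lemma no_high_cycle6 {n : ℕ} {a b c d e f : Fin n}
    (hab : (baseGraph n).Adj a b) (hbc : (baseGraph n).Adj b c)
    (hcd : (baseGraph n).Adj c d) (hde : (baseGraph n).Adj d e)
    (hef : (baseGraph n).Adj e f) (hfa : (baseGraph n).Adj f a)
    (hac : a ≠ c) (hbd : b ≠ d) (hce : c ≠ e) (hdf : d ≠ f) (hea : e ≠ a) (hfb : f ≠ b)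
    (ha : 4 ≤ a.val) (hb : 4 ≤ b.val) (hc : 4 ≤ c.val) (hd : 4 ≤ d.val)
    (he : 4 ≤ e.val) (hf : 4 ≤ f.val) : False := by
  have nab := base_ne_val hab
  have nbc := base_ne_val hbc
  have ncd := base_ne_val hcd
  have nde := base_ne_val hde
  have nef := base_ne_val hef
  have nfa := base_ne_val hfa
  have nac : a.val ≠ c.val := fun hv => hac (Fin.val_injective hv)
  have nbd : b.val ≠ d.val := fun hv => hbd (Fin.val_injective hv)
  have nce : c.val ≠ e.val := fun hv => hce (Fin.val_injective hv)
  have ndf : d.val ≠ f.val := fun hv => hdf (Fin.val_injective hv)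
  have nea : e.val ≠ a.val := fun hv => hea (Fin.val_injective hv)
  have nfb : f.val ≠ b.val := fun hv => hfb (Fin.val_injective hv)
  have hcases : (b.val < a.val ∧ f.val < a.val) ∨ (a.val < b.val ∧ c.val < b.val) ∨
      (b.val < c.val ∧ d.val < c.val) ∨ (c.val < d.val ∧ e.val < d.val) ∨
      (d.val < e.val ∧ f.val < e.val) ∨ (e.val < f.val ∧ a.val < f.val) := by omega
  rcases hcases with ⟨h1, h2⟩ | ⟨h1, h2⟩ | ⟨h1, h2⟩ | ⟨h1, h2⟩ | ⟨h1, h2⟩ | ⟨h1, h2⟩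
  · exact base_two_smaller hab hfa.symm hfb.symm h1 h2 ha
  · exact base_two_smaller hab.symm hbc hac h1 h2 hb
  · exact base_two_smaller hbc.symm hcd hbd h1 h2 hc
  · exact base_two_smaller hcd.symm hde hce h1 h2 hd
  · exact base_two_smaller hde.symm hef hdf h1 h2 he
  · exact base_two_smaller hef.symm hfa hea h1 h2 hf

end BootAux

namespace BootAux

lemma extract {n : ℕ} {G : SimpleGraph (Fin n)} {u v : Fin n}
    (hlt : numCopies sixCycleWithChord G <
      numCopies sixCycleWithChord (G ⊔ SimpleGraph.fromEdgeSet {s(u, v)})) :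
    ∃ f : Fin 6 → Fin n, Function.Injective f ∧ ∃ ph qh : Fin 6,
      sixCycleWithChord.Adj ph qh ∧ s(f ph, f qh) = s(u, v) ∧
      ∀ p q, st ph qh p q → G.Adj (f p) (f q) := by
  have hle : G ≤ G ⊔ SimpleGraph.fromEdgeSet {s(u, v)} := le_sup_left
  obtain ⟨G'', hiso, a, b, hab, hnab⟩ := exists_new_of_numCopies_lt hle hlt
  obtain ⟨φ⟩ := hiso
  obtain ⟨f, hf, hfadj, hrep⟩ := copy_to_map G'' φ
  obtain ⟨ph, qh, hpq, ha, hb⟩ := hrep a b hab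
  subst ha; subst hb
  have hsab : s(f ph, f qh) = s(u, v) := by
    have h2 := G''.adj_sub hab
    rw [SimpleGraph.sup_adj, SimpleGraph.fromEdgeSet_adj] at h2
    rcases h2 with h | ⟨hmem, -⟩
    · exact absurd h hnab
    · exact hmem
  refine ⟨f, hf, ph, qh, hpq, hsab, ?_⟩
  rintro p q ⟨hadj, h1, h2⟩
  have h3 := G''.adj_sub (hfadj p q hadj)
  rw [SimpleGraph.sup_adj, SimpleGraph.fromEdgeSet_adj] at h3
  rcases h3 with h | ⟨hmem, -⟩
  · exact h
  · exfalso
    rw [Set.mem_singleton_iff, ← hsab, Sym2.eq_iff] at hmem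
    rcases hmem with ⟨e1, e2⟩ | ⟨e1, e2⟩
    · exact h1 ⟨hf e1, hf e2⟩
    · exact h2 ⟨hf e1, hf e2⟩

lemma step_bound {n : ℕ} {G : SimpleGraph (Fin n)} {B : ℕ} (hB : 4 ≤ B)
    (hG : ∀ a b : Fin n, G.Adj a b → (baseGraph n).Adj a b ∨ (a.val ≤ B ∧ b.val ≤ B))
    {u v : Fin n}
    (hlt : numCopies sixCycleWithChord G <
      numCopies sixCycleWithChord (G ⊔ SimpleGraph.fromEdgeSet {s(u, v)})) :
    u.val ≤ B + 10 ∧ v.val ≤ B + 10 := by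
  obtain ⟨f, hf, ph, qh, hpq, hs, key⟩ := extract hlt
  have hlow : ∃ z : Fin 6, (f z).val ≤ B := by
    by_contra hcon
    push_neg at hcon
    have hbase : ∀ p q, st ph qh p q → (baseGraph n).Adj (f p) (f q) := by
      intro p q hst
      rcases hG _ _ (key p q hst) with h | ⟨h1, -⟩
      · exact h
      · exact absurd h1 (by have := hcon p; omega)
    have hge : ∀ z : Fin 6, 4 ≤ (f z).val := fun z => by have := hcon z; omega
    rcases cycle_avoiding ph qh hpq with
      ⟨a, b, c, d, hab, hac, had, hbc, hbd, hcd, s1, s2, s3, s4⟩ |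
      ⟨s1, s2, s3, s4, s5, s6⟩
    · exact no_high_cycle4 (hbase _ _ s1) (hbase _ _ s2) (hbase _ _ s3) (hbase _ _ s4)
        (fun h => hac (hf h)) (fun h => hbd (hf h))
        (hge a) (hge b) (hge c) (hge d)
    · exact no_high_cycle6 (hbase _ _ s1) (hbase _ _ s2) (hbase _ _ s3) (hbase _ _ s4)
        (hbase _ _ s5) (hbase _ _ s6)
        (fun h => absurd (hf h) (by decide)) (fun h => absurd (hf h) (by decide))
        (fun h => absurd (hf h) (by decide)) (fun h => absurd (hf h) (by decide))
        (fun h => absurd (hf h) (by decide)) (fun h => absurd (hf h) (by decide))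
        (hge 0) (hge 1) (hge 2) (hge 3) (hge 4) (hge 5)
  obtain ⟨z, hz⟩ := hlow
  have hball : ∀ k w, w ∈ ballL ph qh z k → (f w).val ≤ B + 2 * k := by
    intro k
    induction k with
    | zero =>
      intro w hw
      rw [ballL_zero hw]
      omega
    | succ k ih =>
      intro w hw
      obtain ⟨x, hx, hxw⟩ := ballL_succ hw
      rcases hxw with rfl | hst
      · have := ih _ hx; omega
      · have hGadj := key _ _ hst
        rcases hG _ _ hGadj with hbase | ⟨-, h2⟩
        · have h3 := (base_close hbase).2
          have := ih _ hx
          omega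
        · omega
  have hphv := hball 4 ph (reach_all ph qh hpq z ph)
  have hqhv := hball 4 qh (reach_all ph qh hpq z qh)
  rcases Sym2.eq_iff.mp hs with ⟨h1, h2⟩ | ⟨h1, h2⟩ <;> rw [← h1, ← h2] <;>
    constructor <;> omega

end BootAux

namespace BootAux

lemma bootProcess_succ {α β : Type*} (H : SimpleGraph α) (G : SimpleGraph β) (t : ℕ) :
    bootProcess H G (t + 1) = bootStep H (bootProcess H G t) := rfl

lemma le_bootStep {α β : Type*} (H : SimpleGraph α) (G : SimpleGraph β) :
    G ≤ bootStep H G := le_sup_left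

lemma le_bootProcess {α β : Type*} (H : SimpleGraph α) (G : SimpleGraph β) (t : ℕ) :
    G ≤ bootProcess H G t := by
  induction t with
  | zero => exact le_refl _
  | succ t ih => exact le_trans ih (le_bootStep H _)

lemma bootStep_adj {α β : Type*} (H : SimpleGraph α) (G : SimpleGraph β) (a b : β) :
    (bootStep H G).Adj a b ↔ G.Adj a b ∨ (a ≠ b ∧
      (numCopies H G < numCopies H (G ⊔ SimpleGraph.fromEdgeSet {s(a, b)}) ∨
       numCopies H G < numCopies H (G ⊔ SimpleGraph.fromEdgeSet {s(b, a)}))) := by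
  rw [bootStep, SimpleGraph.sup_adj, SimpleGraph.fromRel_adj]

lemma stable_exists {α : Type*} (H : SimpleGraph α) {n : ℕ} (G : SimpleGraph (Fin n)) :
    ∃ t, bootProcess H G t = bootProcess H G (t + 1) := by
  by_contra h
  push_neg at h
  have hmono : StrictMono (bootProcess H G) :=
    strictMono_nat_of_lt_succ (fun t => lt_of_le_of_ne (le_bootStep H _) (h t))
  obtain ⟨a, b, hne, heq⟩ := Finite.exists_ne_map_eq_of_infinite (bootProcess H G)
  exact hne (hmono.injective heq)

lemma invariant (n : ℕ) (t : ℕ) :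
    ∀ a b : Fin n, (bootProcess sixCycleWithChord (baseGraph n) t).Adj a b →
      (baseGraph n).Adj a b ∨ (a.val ≤ 10 * t + 4 ∧ b.val ≤ 10 * t + 4) := by
  induction t with
  | zero => exact fun a b h => Or.inl h
  | succ t ih =>
    intro a b h
    rw [bootProcess_succ, bootStep_adj] at h
    rcases h with h | ⟨hne, h | h⟩
    · rcases ih a b h with h | ⟨h1, h2⟩
      · exact Or.inl h
      · exact Or.inr ⟨by omega, by omega⟩
    · have := step_bound (B := 10 * t + 4) (by omega) (ih) h
      exact Or.inr ⟨by omega, by omega⟩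
    · have := step_bound (B := 10 * t + 4) (by omega) (ih) h
      exact Or.inr ⟨by omega, by omega⟩

end BootAux

namespace BootAux

lemma base_adj_of_val {n : ℕ} {x y : Fin n}
    (h : (x.val % 2 = 0 ∧ (y.val = x.val + 1 ∨ y.val = x.val + 2)) ∨
      (x.val = 1 ∧ y.val = 3)) : (baseGraph n).Adj x y := by
  rw [base_adj]
  refine ⟨Fin.ne_of_val_ne (by omega), Or.inl ?_⟩
  unfold baseRel
  rw [Nat.even_iff]
  omega

def vmap : Fin 6 → ℕ := ![3, 1, 0, 2, 4, 5]

lemma vmap_le (p : Fin 6) : vmap p ≤ 5 := by fin_cases p <;> decide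

lemma vmap_inj : Function.Injective vmap := by decide

lemma v0 : vmap 0 = 3 := by decide
lemma v1 : vmap 1 = 1 := by decide
lemma v2 : vmap 2 = 0 := by decide
lemma v3 : vmap 3 = 2 := by decide
lemma v4 : vmap 4 = 4 := by decide
lemma v5 : vmap 5 = 5 := by decide

lemma top_edges {n : ℕ} {G : SimpleGraph (Fin n)} (hG : baseGraph n ≤ G)
    (hstab : bootStep sixCycleWithChord G = G) :
    ∀ j : ℕ, 2 * j + 3 < n → ∀ x y : Fin n, x.val = 2 * j + 1 → y.val = 2 * j + 3 →
      G.Adj x y := by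
  intro j
  induction j with
  | zero =>
    intro hj x y hx hy
    exact hG (base_adj_of_val (Or.inr ⟨hx, hy⟩))
  | succ j ih =>
    intro hj x y hx hy
    have hj' : 2 * j + 3 < n := by omega
    have hprev : G.Adj ⟨2 * j + 1, by omega⟩ ⟨2 * j + 3, by omega⟩ := ih hj' _ _ rfl rfl
    by_contra hne
    set G₂ := G ⊔ SimpleGraph.fromEdgeSet {s(x, y)} with hG₂def
    have hle : G ≤ G₂ := le_sup_left
    have hxv : x.val = 2 * j + 3 := by omega
    have hyv : y.val = 2 * j + 5 := by omega
    set f : Fin 6 → Fin n :=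
      (fun p => ⟨2 * j + vmap p, by have := vmap_le p; omega⟩) with hfdef
    have fv : ∀ p : Fin 6, (f p).val = 2 * j + vmap p := fun _ => rfl
    have f0 : f 0 = x := Fin.val_injective (by rw [fv, v0, hxv])
    have f5 : f 5 = y := Fin.val_injective (by rw [fv, v5, hyv])
    have hf : Function.Injective f := by
      intro p q h
      have hv := congrArg Fin.val h
      rw [fv, fv] at hv
      exact vmap_inj (by omega)
    have hadj : ∀ p q, sixCycleWithChord.Adj p q → G₂.Adj (f p) (f q) := by
      have e01 : G₂.Adj (f 0) (f 1) := hle (by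
        rw [f0]
        have h1 : f 1 = (⟨2 * j + 1, by omega⟩ : Fin n) :=
          Fin.val_injective (by rw [fv, v1])
        have hx' : x = (⟨2 * j + 3, by omega⟩ : Fin n) := Fin.val_injective hxv
        rw [h1, hx']
        exact hprev.symm)
      have e12 : G₂.Adj (f 1) (f 2) := hle (hG (base_adj_of_val (Or.inl
        ⟨by rw [fv, v2]; omega, Or.inl (by rw [fv, fv, v1, v2])⟩))).symm
      have e23 : G₂.Adj (f 2) (f 3) := hle (hG (base_adj_of_val (Or.inl
        ⟨by rw [fv, v2]; omega, Or.inr (by rw [fv, fv, v2, v3])⟩)))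
      have e34 : G₂.Adj (f 3) (f 4) := hle (hG (base_adj_of_val (Or.inl
        ⟨by rw [fv, v3]; omega, Or.inr (by rw [fv, fv, v3, v4])⟩)))
      have e45 : G₂.Adj (f 4) (f 5) := hle (hG (base_adj_of_val (Or.inl
        ⟨by rw [fv, v4]; omega, Or.inl (by rw [fv, fv, v4, v5])⟩)))
      have e50 : G₂.Adj (f 5) (f 0) := by
        have hfe : (SimpleGraph.fromEdgeSet {s(x, y)}).Adj (f 5) (f 0) := by
          rw [SimpleGraph.fromEdgeSet_adj]
          refine ⟨?_, Fin.ne_of_val_ne (by rw [fv, fv, v5, v0]; omega)⟩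
          rw [f5, f0, Set.mem_singleton_iff, Sym2.eq_iff]
          exact Or.inr ⟨rfl, rfl⟩
        exact (le_sup_right : SimpleGraph.fromEdgeSet {s(x, y)} ≤ G₂) hfe
      have e03 : G₂.Adj (f 0) (f 3) := (hle (hG (base_adj_of_val (Or.inl
        ⟨by rw [fv, v3]; omega, Or.inl (by rw [fv, fv, v0, v3])⟩)))).symm
      intro p q hpq
      fin_cases p <;> fin_cases q <;>
        first
        | exact absurd hpq (by decide)
        | exact e01 | exact e01.symm | exact e12 | exact e12.symm
        | exact e23 | exact e23.symm | exact e34 | exact e34.symm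
        | exact e45 | exact e45.symm | exact e50 | exact e50.symm
        | exact e03 | exact e03.symm
    obtain ⟨G', hiso, hiff⟩ := map_to_copy f hf hadj
    have hG'adj : G'.Adj (f 5) (f 0) := (hiff _ _).mpr ⟨5, 0, by decide, rfl, rfl⟩
    have hnot : ¬ G.Adj (f 5) (f 0) := by
      rw [f5, f0]
      exact fun hcon => hne hcon.symm
    have hlt := numCopies_lt_of_new hle G' hiso (f 5) (f 0) hG'adj hnot
    apply hne
    have hstep : (bootStep sixCycleWithChord G).Adj x y := by
      rw [bootStep_adj]
      exact Or.inr ⟨Fin.ne_of_val_ne (by omega), Or.inl hlt⟩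
    rwa [hstab] at hstep

end BootAux

namespace BootAux

def col {n : ℕ} (a : Fin n) : Fin 2 :=
  if a.val % 4 = 1 ∨ a.val % 4 = 2 then 1 else 0

lemma col_base {n : ℕ} {a b : Fin n} (h : (baseGraph n).Adj a b) : col a ≠ col b := by
  rw [base_adj] at h
  obtain ⟨-, h⟩ := h
  have hq : (a.val % 4 = 1 ∨ a.val % 4 = 2) ↔ ¬(b.val % 4 = 1 ∨ b.val % 4 = 2) := by
    unfold baseRel at h
    rw [Nat.even_iff, Nat.even_iff] at h
    omega
  unfold col
  split_ifs with h1 h2 h2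
  · exact absurd h2 (hq.mp h1)
  · decide
  · decide
  · exact absurd (hq.mpr h2) h1

lemma fin2_trans : ∀ a b c d : Fin 2, a ≠ b → b ≠ c → c ≠ d → a ≠ d := by decide

lemma col_step {n : ℕ} {G : SimpleGraph (Fin n)}
    (ihcol : ∀ a b : Fin n, G.Adj a b → col a ≠ col b) {u v : Fin n}
    (hlt : numCopies sixCycleWithChord G <
      numCopies sixCycleWithChord (G ⊔ SimpleGraph.fromEdgeSet {s(u, v)})) :
    col u ≠ col v := by
  obtain ⟨f, hf, ph, qh, hpq, hs, key⟩ := extract hlt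
  obtain ⟨r, s, a1, a2, a3, hrp, hrq, hsp, hsq⟩ := four_cycle ph qh hpq
  have c1 : col (f qh) ≠ col (f r) :=
    ihcol _ _ (key _ _ ⟨a1, fun ⟨h1, _⟩ => hpq.ne h1.symm, fun ⟨_, h2⟩ => hrp h2⟩)
  have c2 : col (f r) ≠ col (f s) :=
    ihcol _ _ (key _ _ ⟨a2, fun ⟨h1, _⟩ => hrp h1, fun ⟨h1, _⟩ => hrq h1⟩)
  have c3 : col (f s) ≠ col (f ph) :=
    ihcol _ _ (key _ _ ⟨a3, fun ⟨_, h2⟩ => hpq.ne h2, fun ⟨h1, _⟩ => hsq h1⟩)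
  have cpq : col (f ph) ≠ col (f qh) :=
    fin2_trans _ _ _ _ c3.symm c2.symm c1.symm
  rcases Sym2.eq_iff.mp hs with ⟨h1, h2⟩ | ⟨h1, h2⟩
  · rw [← h1, ← h2]; exact cpq
  · rw [← h1, ← h2]; exact cpq.symm

lemma col_invariant (n : ℕ) (t : ℕ) :
    ∀ a b : Fin n, (bootProcess sixCycleWithChord (baseGraph n) t).Adj a b →
      col a ≠ col b := by
  induction t with
  | zero => exact fun a b h => col_base h
  | succ t ih =>
    intro a b h
    rw [bootProcess_succ, bootStep_adj] at h
    rcases h with h | ⟨hne, h | h⟩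
    · exact ih a b h
    · exact col_step ih h
    · exact (col_step ih h).symm

end BootAux


/-- There exist `c > 0` and `n₀` such that for every `n ≥ n₀` there is
an `n`-vertex graph `G̃` whose `H̃`-bootstrap process (where `H̃` is the 6-cycle with a
chord between opposite vertices) runs for at least `c·n` steps and is bipartite at every
time step. -/
theorem cycleWithChord_linear_bipartite :
    ∃ c : ℝ, 0 < c ∧ ∃ n₀ : ℕ, ∀ n : ℕ, n₀ ≤ n →
      ∃ G : SimpleGraph (Fin n),
        c * n ≤ (runningTime sixCycleWithChord G : ℝ) ∧
        ∀ i : ℕ, (bootProcess sixCycleWithChord G i).Colorable 2 := by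
  refine ⟨1/20, by norm_num, 20, fun n hn => ⟨BootAux.baseGraph n, ?_, ?_⟩⟩
  · -- running time bound
    set T := runningTime sixCycleWithChord (BootAux.baseGraph n) with hTdef
    have hmem := Nat.sInf_mem (BootAux.stable_exists sixCycleWithChord (BootAux.baseGraph n))
    have hstab : bootStep sixCycleWithChord
        (bootProcess sixCycleWithChord (BootAux.baseGraph n) T) =
        bootProcess sixCycleWithChord (BootAux.baseGraph n) T := by
      exact (hmem).symm
    set j := n / 2 - 2 with hjdef
    have hj : 2 * j + 3 < n := by omega
    have hj6 : 2 * j + 6 ≥ n := by omega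
    have hjge : 8 ≤ j := by omega
    have htop := BootAux.top_edges (BootAux.le_bootProcess _ _ T) hstab j hj
      ⟨2 * j + 1, by omega⟩ ⟨2 * j + 3, by omega⟩ rfl rfl
    have hinv := BootAux.invariant n T _ _ htop
    have hT : n ≤ 20 * T := by
      rcases hinv with hbase | ⟨h1, h2⟩
      · exfalso
        rw [BootAux.base_adj] at hbase
        obtain ⟨-, hrel | hrel⟩ := hbase
        · unfold BootAux.baseRel at hrel
          rw [Nat.even_iff] at hrel
          have hrel' : ((2 * j + 1) % 2 = 0 ∧ (2 * j + 3 = 2 * j + 1 + 1 ∨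
              2 * j + 3 = 2 * j + 1 + 2)) ∨ (2 * j + 1 = 1 ∧ 2 * j + 3 = 3) := by
            rcases hrel with ⟨ha, hb⟩ | ⟨ha, hb⟩ | ⟨ha, hb⟩
            · exact Or.inl ⟨ha, Or.inl hb⟩
            · exact Or.inl ⟨ha, Or.inr hb⟩
            · exact Or.inr ⟨ha, hb⟩
          omega
        · unfold BootAux.baseRel at hrel
          rw [Nat.even_iff] at hrel
          have hrel' : ((2 * j + 3) % 2 = 0 ∧ (2 * j + 1 = 2 * j + 3 + 1 ∨
              2 * j + 1 = 2 * j + 3 + 2)) ∨ (2 * j + 3 = 1 ∧ 2 * j + 1 = 3) := by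
            rcases hrel with ⟨ha, hb⟩ | ⟨ha, hb⟩ | ⟨ha, hb⟩
            · exact Or.inl ⟨ha, Or.inl hb⟩
            · exact Or.inl ⟨ha, Or.inr hb⟩
            · exact Or.inr ⟨ha, hb⟩
          omega
      · have h2' : 2 * j + 3 ≤ 10 * T + 4 := h2
        omega
    have hTr : (n : ℝ) ≤ 20 * (T : ℝ) := by exact_mod_cast hT
    linarith
  · intro i
    exact ⟨SimpleGraph.Coloring.mk BootAux.col
      (fun {a b} hab => BootAux.col_invariant n i a b hab)⟩
end
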